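/- arXiv:0704.2216 — 4 statements merged into one kernel-verified Lean document; each statement's English description precedes it below -/
import Mathlib

section
/- Let n ≥ 1 and let f ∈ ℂ[z₁,…,zₙ] be a nonzero polynomial whose support, viewed in ℝⁿ, is an affinely independent set (so that the Newton polytope Δ_f is a simplex whose vertex set is exactly the support of f; in particular f is maximally sparse). Then the amoeba 𝒜_f is solid: the number of connected components of ℝⁿ ∖ 𝒜_f equals the cardinality of the support of f. -/
open MvPolynomial

/-- The amoeba of a nonzero polynomial `f ∈ ℂ[z₁,…,zₙ]`. -/
def amoeba {n : ℕ} (f : MvPolynomial (Fin n) ℂ) : Set (Fin n → ℝ) :=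
  {x | ∃ z : Fin n → ℂ, (∀ i, z i ≠ 0) ∧ MvPolynomial.eval z f = 0 ∧
    ∀ i, x i = Real.log ‖z i‖}

/-- The support of `f`, viewed as a subset of `ℝⁿ`. -/
def suppR {n : ℕ} (f : MvPolynomial (Fin n) ℂ) : Set (Fin n → ℝ) :=
  (fun α : Fin n →₀ ℕ => fun i => (α i : ℝ)) '' ↑f.support

/-- Triangle closing: three nonneg lengths satisfying triangle inequalities can be
closed into a (possibly degenerate) triangle with unit direction vectors. -/
lemma triangle_close (a b c : ℝ) (ha : 0 < a) (hb : 0 < b) (hc : 0 < c)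
    (h1 : a ≤ b + c) (h2 : b ≤ a + c) (h3 : c ≤ a + b) :
    ∃ u v w : ℂ, ‖u‖ = 1 ∧ ‖v‖ = 1 ∧ ‖w‖ = 1 ∧
      (a : ℂ) * u + (b : ℂ) * v + (c : ℂ) * w = 0 := by
  set C : ℝ := (c ^ 2 - a ^ 2 - b ^ 2) / (2 * a * b) with hC
  have hab : (0:ℝ) < 2 * a * b := by positivity
  have hC1 : C ≤ 1 := by
    rw [hC, div_le_one hab]
    nlinarith
  have hCm1 : -1 ≤ C := by
    rw [hC, le_div_iff₀ hab]
    nlinarith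
  have hs : 0 ≤ 1 - C ^ 2 := by nlinarith
  set s : ℝ := Real.sqrt (1 - C ^ 2) with hsdef
  have hs2 : s ^ 2 = 1 - C ^ 2 := Real.sq_sqrt hs
  refine ⟨1, ⟨C, s⟩, -(a + b * ⟨C, s⟩) / c, by simp, ?_, ?_, ?_⟩
  · have : ‖(⟨C, s⟩ : ℂ)‖ = 1 := by
      rw [Complex.norm_def, Complex.normSq_mk]
      rw [show C * C + s * s = 1 by nlinarith]
      exact Real.sqrt_one
    simpa using this
  · have hnum : ‖(-(↑a + ↑b * ⟨C, s⟩) : ℂ)‖ = c := by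
      have : (-(↑a + ↑b * ⟨C, s⟩) : ℂ) = ⟨-(a + b * C), -(b * s)⟩ := by
        apply Complex.ext <;> simp [Complex.ext_iff] <;> ring
      rw [this, Complex.norm_def, Complex.normSq_mk]
      rw [show -(a + b * C) * -(a + b * C) + -(b * s) * -(b * s) = c ^ 2 by
        have : b ^ 2 * s ^ 2 = b ^ 2 * (1 - C ^ 2) := by rw [hs2]
        have hCc : 2 * a * b * C = c ^ 2 - a ^ 2 - b ^ 2 := by
          rw [hC]; field_simp
        nlinarith]
      exact Real.sqrt_sq hc.le
    have : ‖(-(↑a + ↑b * ⟨C, s⟩) / c : ℂ)‖ = c / c := by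
      rw [norm_div]
      simp only [hnum]
      congr 1
      simp [abs_of_pos hc]
    rw [this, div_self hc.ne']
  · have hcne : (c : ℂ) ≠ 0 := by exact_mod_cast hc.ne'
    field_simp
    ring

/-- Polygon closing lemma. -/
lemma polygon_close {ι : Type*} [DecidableEq ι] :
    ∀ (m : ℕ) (s : Finset ι) (r : ι → ℝ), s.card = m →
    (∀ j ∈ s, 0 < r j) → (∀ j ∈ s, 2 * r j ≤ ∑ k ∈ s, r k) →
    ∃ u : ι → ℂ, (∀ j ∈ s, ‖u j‖ = 1) ∧ ∑ j ∈ s, (r j : ℂ) * u j = 0 := by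
  intro m
  induction m using Nat.strong_induction_on with
  | _ m ih =>
  intro s r hcard hpos hbal
  match m, hcard with
  | 0, hcard =>
    rw [Finset.card_eq_zero] at hcard
    subst hcard
    exact ⟨fun _ => 1, by simp, by simp⟩
  | 1, hcard =>
    rw [Finset.card_eq_one] at hcard
    obtain ⟨i, rfl⟩ := hcard
    have := hbal i (by simp)
    simp at this
    linarith [hpos i (by simp)]
  | 2, hcard =>
    rw [Finset.card_eq_two] at hcard
    obtain ⟨i, j, hij, rfl⟩ := hcard
    have hsum : ∑ k ∈ ({i, j} : Finset ι), r k = r i + r j :=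
      Finset.sum_pair hij
    have h1 := hbal i (by simp); have h2 := hbal j (by simp)
    rw [hsum] at h1 h2
    have hrij : r i = r j := by linarith
    refine ⟨fun k => if k = i then 1 else -1, ?_, ?_⟩
    · intro k _; by_cases h : k = i <;> simp [h]
    · rw [Finset.sum_pair hij]
      simp [Ne.symm hij]
      rw [hrij]
      ring
  | 3, hcard =>
    rw [Finset.card_eq_three] at hcard
    obtain ⟨i, j, k, hij, hik, hjk, rfl⟩ := hcard
    have hsum : ∑ l ∈ ({i, j, k} : Finset ι), r l = r i + r j + r k := by
      rw [Finset.sum_insert (by simp [hij, hik]), Finset.sum_pair hjk]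
      ring
    have h1 := hbal i (by simp); have h2 := hbal j (by simp)
    have h3 := hbal k (by simp)
    rw [hsum] at h1 h2 h3
    obtain ⟨u, v, w, hu, hv, hw, huvw⟩ :=
      triangle_close (r i) (r j) (r k) (hpos i (by simp)) (hpos j (by simp))
        (hpos k (by simp)) (by linarith) (by linarith) (by linarith)
    refine ⟨fun l => if l = i then u else if l = j then v else w, ?_, ?_⟩
    · intro l hl
      simp only [Finset.mem_insert, Finset.mem_singleton] at hl
      rcases hl with rfl | rfl | rfl
      · simp [hu]
      · simp [Ne.symm hij, hv]
      · simp [Ne.symm hik, Ne.symm hjk, hw]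
    · rw [Finset.sum_insert (by simp [hij, hik]), Finset.sum_pair hjk]
      simp [Ne.symm hij, Ne.symm hik, Ne.symm hjk]
      linear_combination huvw
  | (m + 4), hcard =>
    -- inductive step: merge the two smallest entries
    have hne : s.Nonempty := by rw [← Finset.card_pos, hcard]; omega
    obtain ⟨i, his, hmini⟩ := s.exists_min_image r hne
    have hcard' : (s.erase i).card = m + 3 := by
      rw [Finset.card_erase_of_mem his, hcard]; omega
    have hne' : (s.erase i).Nonempty := by rw [← Finset.card_pos, hcard']; omega
    obtain ⟨j, hjs', hminj⟩ := (s.erase i).exists_min_image r hne'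
    have hji : j ≠ i := (Finset.mem_erase.mp hjs').1
    have hjs : j ∈ s := (Finset.mem_erase.mp hjs').2
    -- pick two more elements
    set t := (s.erase i).erase j with ht
    have hcardt : t.card = m + 2 := by rw [ht, Finset.card_erase_of_mem hjs', hcard']; omega
    have htne : t.Nonempty := by rw [← Finset.card_pos, hcardt]; omega
    obtain ⟨k1, hk1⟩ := htne
    have htne2 : (t.erase k1).Nonempty := by
      rw [← Finset.card_pos, Finset.card_erase_of_mem hk1, hcardt]; omega
    obtain ⟨k2, hk2⟩ := htne2
    have hk1t : k1 ∈ t := hk1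
    have hk2t : k2 ∈ t := (Finset.mem_erase.mp hk2).2
    have hk21 : k2 ≠ k1 := (Finset.mem_erase.mp hk2).1
    have hk1i : k1 ≠ i := (Finset.mem_erase.mp (Finset.mem_erase.mp hk1t).2).1
    have hk1j : k1 ≠ j := (Finset.mem_erase.mp hk1t).1
    have hk2i : k2 ≠ i := (Finset.mem_erase.mp (Finset.mem_erase.mp hk2t).2).1
    have hk2j : k2 ≠ j := (Finset.mem_erase.mp hk2t).1
    have hk1s : k1 ∈ s := Finset.mem_of_mem_erase (Finset.mem_of_mem_erase hk1t)
    have hk2s : k2 ∈ s := Finset.mem_of_mem_erase (Finset.mem_of_mem_erase hk2t)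
    -- key: 2 (r i + r j) ≤ total
    have hmerge : 2 * (r i + r j) ≤ ∑ k ∈ s, r k := by
      have hq : ({i, j, k1, k2} : Finset ι) ⊆ s := by
        intro x hx
        simp only [Finset.mem_insert, Finset.mem_singleton] at hx
        rcases hx with rfl | rfl | rfl | rfl <;> assumption
      have hqsum : ∑ x ∈ ({i, j, k1, k2} : Finset ι), r x = r i + r j + r k1 + r k2 := by
        rw [Finset.sum_insert (by simp [Ne.symm hji, Ne.symm hk1i, Ne.symm hk2i]),
          Finset.sum_insert (by simp [Ne.symm hk1j, Ne.symm hk2j]),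
          Finset.sum_pair (Ne.symm hk21)]
        ring
      have h1 : ∑ x ∈ ({i, j, k1, k2} : Finset ι), r x ≤ ∑ k ∈ s, r k :=
        Finset.sum_le_sum_of_subset_of_nonneg hq
          (fun x hx _ => (hpos x hx).le)
      have hk1ge : r i ≤ r k1 := hmini k1 hk1s
      have hk2ge : r j ≤ r k2 := hminj k2 (Finset.mem_of_mem_erase hk2t)
      rw [hqsum] at h1
      linarith
    -- merged data
    set s' := s.erase j with hs'
    set r' := Function.update r i (r i + r j) with hr'
    have his' : i ∈ s' := Finset.mem_erase.mpr ⟨Ne.symm hji, his⟩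
    have hsum' : ∑ k ∈ s', r' k = ∑ k ∈ s, r k := by
      have e1 : ∑ k ∈ s', r' k = (r i + r j) + ∑ k ∈ s' \ {i}, r k := by
        rw [hr']; exact Finset.sum_update_of_mem his' _ _
      have e2 : r j + ∑ k ∈ s', r k = ∑ k ∈ s, r k := Finset.add_sum_erase _ r hjs
      have e3 : r i + ∑ k ∈ s' \ {i}, r k = ∑ k ∈ s', r k := by
        rw [← Finset.erase_eq]; exact Finset.add_sum_erase _ r his'
      linarith
    have hpos' : ∀ k ∈ s', 0 < r' k := by
      intro k hk
      rw [hr']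
      by_cases h : k = i
      · rw [h, Function.update_self]
        linarith [hpos i his, hpos j hjs]
      · rw [Function.update_of_ne h]
        exact hpos k (Finset.mem_of_mem_erase hk)
    have hbal' : ∀ k ∈ s', 2 * r' k ≤ ∑ l ∈ s', r' l := by
      intro k hk
      rw [hsum', hr']
      by_cases h : k = i
      · rw [h, Function.update_self]; exact hmerge
      · rw [Function.update_of_ne h]
        exact hbal k (Finset.mem_of_mem_erase hk)
    obtain ⟨u', hu'norm, hu'sum⟩ := ih (m + 3) (by omega) s' r'
      (by rw [hs', Finset.card_erase_of_mem hjs, hcard]; omega) hpos' hbal'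
    refine ⟨Function.update u' j (u' i), ?_, ?_⟩
    · intro k hk
      by_cases h : k = j
      · subst h; rw [Function.update_self]; exact hu'norm i his'
      · rw [Function.update_of_ne h]
        exact hu'norm k (Finset.mem_erase.mpr ⟨h, hk⟩)
    · rw [← Finset.add_sum_erase _ _ hjs, Function.update_self, ← hs']
      have hcongr : ∑ k ∈ s', (r k : ℂ) * Function.update u' j (u' i) k
          = ∑ k ∈ s', (r k : ℂ) * u' k := by
        apply Finset.sum_congr rfl
        intro k hk
        rw [Function.update_of_ne (Finset.mem_erase.mp hk).1]
      rw [hcongr]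
      have hsplit : ∑ k ∈ s', (r' k : ℂ) * u' k
          = ∑ k ∈ s', (r k : ℂ) * u' k + (r j : ℂ) * u' i := by
        rw [← Finset.add_sum_erase _ _ his', ← Finset.add_sum_erase _ (fun k => (r k:ℂ) * u' k) his']
        have : ∀ k ∈ s'.erase i, (r' k : ℂ) * u' k = (r k : ℂ) * u' k := by
          intro k hk
          rw [hr', Function.update_of_ne (Finset.mem_erase.mp hk).1]
        rw [Finset.sum_congr rfl this, hr', Function.update_self]
        push_cast
        ring
      rw [hsplit] at hu'sum
      rw [show (r j : ℂ) * u' i + ∑ k ∈ s', (r k : ℂ) * u' k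
          = ∑ k ∈ s', (r k : ℂ) * u' k + (r j : ℂ) * u' i by ring, hu'sum]

lemma sum_sq_expand {ι κ : Type*} [Fintype ι] [Fintype κ] (c : ι → ℝ) (g : ι → κ → ℝ) :
    ∑ i : κ, (∑ j, c j * g j i) ^ 2 = ∑ j, ∑ k, c j * c k * ∑ i, g j i * g k i := by
  have h1 : ∀ i : κ, (∑ j, c j * g j i) ^ 2 = ∑ j, ∑ k, (c j * g j i) * (c k * g k i) := by
    intro i; rw [sq, Finset.sum_mul_sum]
  rw [Finset.sum_congr rfl fun i _ => h1 i, Finset.sum_comm]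
  apply Finset.sum_congr rfl; intro j _
  rw [Finset.sum_comm]
  apply Finset.sum_congr rfl; intro k _
  rw [Finset.mul_sum]
  apply Finset.sum_congr rfl; intro i _; ring

/-- If `α` is an affinely independent family in `ℝⁿ`, then any target values can be
realized by a linear functional up to a common additive constant. -/
lemma solve_system {n : ℕ} {ι : Type*} [Fintype ι] [DecidableEq ι]
    (α : ι → (Fin n → ℝ)) (hα : AffineIndependent ℝ α) (φ : ι → ℝ) :
    ∃ (θ : Fin n → ℝ) (t : ℝ), ∀ j, (∑ i, α j i * θ i) = φ j + t := by
  set G : Matrix ι ι ℝ := Matrix.of (fun j k => (∑ i, α j i * α k i) + 1) with hG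
  have hinj : Function.Injective G.mulVecLin := by
    rw [← LinearMap.ker_eq_bot, LinearMap.ker_eq_bot']
    intro c hc
    have hc' : G.mulVec c = 0 := hc
    have hQ : ∑ j, c j * G.mulVec c j = 0 := by rw [hc']; simp
    have expand : ∀ j, c j * G.mulVec c j
        = (∑ k, c j * c k * ∑ i, α j i * α k i) + ∑ k, c j * c k := by
      intro j
      simp only [Matrix.mulVec, dotProduct, hG, Matrix.of_apply]
      rw [Finset.mul_sum, ← Finset.sum_add_distrib]
      apply Finset.sum_congr rfl; intro k _; ring
    have hexp : ∑ j, c j * G.mulVec c j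
        = (∑ i, (∑ j, c j * α j i) ^ 2) + (∑ j, c j) ^ 2 := by
      rw [Finset.sum_congr rfl fun j _ => expand j, Finset.sum_add_distrib,
        sum_sq_expand c α, sq, Finset.sum_mul_sum]
    rw [hexp] at hQ
    have h1 : (0:ℝ) ≤ ∑ i, (∑ j, c j * α j i) ^ 2 :=
      Finset.sum_nonneg fun i _ => sq_nonneg _
    have h2 : (0:ℝ) ≤ (∑ j, c j) ^ 2 := sq_nonneg _
    have h3 : ∑ i, (∑ j, c j * α j i) ^ 2 = 0 := by linarith
    have hw0 : (∑ j, c j) = 0 := by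
      have : (∑ j, c j) ^ 2 = 0 := by linarith
      exact pow_eq_zero_iff (by norm_num) |>.mp this
    have hsq : ∀ i, (∑ j, c j * α j i) = 0 := by
      intro i
      have := (Finset.sum_eq_zero_iff_of_nonneg (fun i _ => sq_nonneg _)).mp h3 i
        (Finset.mem_univ i)
      exact pow_eq_zero_iff (by norm_num) |>.mp this
    have hcomb : ∑ j, c j • α j = 0 := by
      funext i
      simp only [Finset.sum_apply, Pi.smul_apply, smul_eq_mul, Pi.zero_apply]
      exact hsq i
    have := affineIndependent_iff.mp hα Finset.univ c hw0 hcomb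
    funext j
    exact this j (Finset.mem_univ j)
  have hsurj : Function.Surjective G.mulVecLin :=
    (LinearMap.injective_iff_surjective).mp hinj
  obtain ⟨c, hc⟩ := hsurj φ
  refine ⟨fun i => ∑ j, c j * α j i, -(∑ j, c j), fun j => ?_⟩
  have hcj : ∑ k, ((∑ i, α j i * α k i) + 1) * c k = φ j := by
    have : G.mulVec c j = φ j := by rw [← hc]; rfl
    simpa only [Matrix.mulVec, dotProduct, hG, Matrix.of_apply] using this
  have key : ∑ i, α j i * (∑ k, c k * α k i) = ∑ k, c k * ∑ i, α j i * α k i := by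
    have h1 : ∀ i, α j i * (∑ k, c k * α k i) = ∑ k, α j i * (c k * α k i) :=
      fun i => Finset.mul_sum _ _ _
    rw [Finset.sum_congr rfl fun i _ => h1 i, Finset.sum_comm]
    apply Finset.sum_congr rfl; intro k _
    rw [Finset.mul_sum]
    apply Finset.sum_congr rfl; intro i _; ring
  have split : ∑ k, ((∑ i, α j i * α k i) + 1) * c k
      = (∑ k, c k * ∑ i, α j i * α k i) + ∑ k, c k := by
    rw [← Finset.sum_add_distrib]
    apply Finset.sum_congr rfl; intro k _; ring
  rw [split] at hcj
  simp only []
  rw [key]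
  linarith

/-- If a set `S` is the union of finitely many nonempty, pairwise disjoint, open,
preconnected sets, then its connected components are counted by the index set. -/
lemma card_connectedComponents_of_partition {X : Type*} [TopologicalSpace X] {ι : Type*}
    [DecidableEq ι] (s : Finset ι) (U : ι → Set X) (S : Set X)
    (hS : S = ⋃ α ∈ s, U α)
    (hopen : ∀ α ∈ s, IsOpen (U α))
    (hne : ∀ α ∈ s, (U α).Nonempty)
    (hconn : ∀ α ∈ s, IsPreconnected (U α))
    (hdisj : ∀ α ∈ s, ∀ β ∈ s, α ≠ β → Disjoint (U α) (U β)) :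
    Nat.card (ConnectedComponents ↥S) = s.card := by
  classical
  have hsub : ∀ α ∈ s, U α ⊆ S := by
    intro α hα x hx
    rw [hS]
    exact Set.mem_biUnion hα hx
  set V : ι → Set ↥S := fun α => Subtype.val ⁻¹' U α with hV
  have hVopen : ∀ α ∈ s, IsOpen (V α) := fun α hα =>
    (hopen α hα).preimage continuous_subtype_val
  have hVcompl : ∀ α ∈ s, (V α)ᶜ = ⋃ β ∈ s.erase α, V β := by
    intro α hα
    ext y
    simp only [Set.mem_compl_iff, Set.mem_iUnion, hV, Set.mem_preimage]
    constructor
    · intro hy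
      have hmem : (y : X) ∈ ⋃ α ∈ s, U α := hS.subset y.2
      obtain ⟨β, hβ, hyβ⟩ := Set.mem_iUnion₂.mp hmem
      refine ⟨β, Finset.mem_erase.mpr ⟨?_, hβ⟩, hyβ⟩
      rintro rfl; exact hy hyβ
    · rintro ⟨β, hβ, hyβ⟩ hyα
      have hβα := (Finset.mem_erase.mp hβ).1
      exact Set.disjoint_left.mp
        (hdisj α hα β (Finset.mem_erase.mp hβ).2 (Ne.symm hβα)) hyα hyβ
  have hVclopen : ∀ α ∈ s, IsClopen (V α) := by
    intro α hα
    refine ⟨?_, hVopen α hα⟩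
    rw [← isOpen_compl_iff, hVcompl α hα]
    exact isOpen_biUnion fun β hβ => hVopen β (Finset.mem_of_mem_erase hβ)
  have hVconn : ∀ α ∈ s, IsPreconnected (V α) := by
    intro α hα
    have himg : Subtype.val '' (V α) = U α := by
      rw [hV]
      rw [Subtype.image_preimage_coe]
      exact Set.inter_eq_self_of_subset_right (hsub α hα)
    have := hconn α hα
    rw [← himg] at this
    exact (Topology.IsInducing.subtypeVal.isPreconnected_image).mp this
  -- pick base points
  have hpt : ∀ α : {a // a ∈ s}, ∃ y : ↥S, (y : X) ∈ U α.1 := by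
    rintro ⟨α, hα⟩
    obtain ⟨x, hx⟩ := hne α hα
    exact ⟨⟨x, hsub α hα hx⟩, hx⟩
  choose p hp using hpt
  set F : {a // a ∈ s} → ConnectedComponents ↥S :=
    fun α => ConnectedComponents.mk (p α) with hF
  have hbij : Function.Bijective F := by
    constructor
    · intro α β hαβ
      rw [hF] at hαβ
      simp only [ConnectedComponents.coe_eq_coe] at hαβ
      have h1 : p β ∈ connectedComponent (p α) := by
        rw [hαβ]; exact mem_connectedComponent
      have h2 : connectedComponent (p α) ⊆ V α.1 :=
        (hVclopen α.1 α.2).connectedComponent_subset (hp α)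
      have h3 : (p β : X) ∈ U α.1 := h2 h1
      by_contra hne'
      have : α.1 ≠ β.1 := fun h => hne' (Subtype.ext h)
      exact Set.disjoint_left.mp (hdisj α.1 α.2 β.1 β.2 this) h3 (hp β)
    · intro c
      obtain ⟨y, rfl⟩ := ConnectedComponents.surjective_coe c
      have hmem : (y : X) ∈ ⋃ α ∈ s, U α := hS.subset y.2
      obtain ⟨α, hα, hyα⟩ := Set.mem_iUnion₂.mp hmem
      refine ⟨⟨α, hα⟩, ?_⟩
      rw [hF]
      simp only [ConnectedComponents.coe_eq_coe]
      have hyV : y ∈ V α := hyα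
      have hpV : p ⟨α, hα⟩ ∈ V α := hp ⟨α, hα⟩
      have hsubc : V α ⊆ connectedComponent y :=
        (hVconn α hα).subset_connectedComponent hyV
      exact (connectedComponent_eq (hsubc hpV)).symm
  calc Nat.card (ConnectedComponents ↥S) = Nat.card {a // a ∈ s} :=
        (Nat.card_eq_of_bijective F hbij).symm
    _ = s.card := Nat.card_eq_finsetCard s

/-- The modulus of the `α`-term of `f` at `Log⁻¹ x`. -/
noncomputable def termAbs {n : ℕ} (f : MvPolynomial (Fin n) ℂ) (α : Fin n →₀ ℕ)
    (x : Fin n → ℝ) : ℝ :=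
  ‖MvPolynomial.coeff α f‖ * Real.exp (∑ i, (α i : ℝ) * x i)

lemma termAbs_pos {n : ℕ} {f : MvPolynomial (Fin n) ℂ} {α : Fin n →₀ ℕ}
    (hα : α ∈ f.support) (x : Fin n → ℝ) : 0 < termAbs f α x := by
  have : MvPolynomial.coeff α f ≠ 0 := MvPolynomial.mem_support_iff.mp hα
  have h1 : 0 < ‖MvPolynomial.coeff α f‖ := by
    simpa using norm_pos_iff.mpr this
  exact mul_pos h1 (Real.exp_pos _)

lemma balanced_mem_amoeba {n : ℕ} (f : MvPolynomial (Fin n) ℂ)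
    (hAI : AffineIndependent ℝ
      (fun β : {a // a ∈ f.support} => (fun i => ((β : Fin n →₀ ℕ) i : ℝ))))
    (x : Fin n → ℝ)
    (hbal : ∀ α ∈ f.support, 2 * termAbs f α x ≤ ∑ β ∈ f.support, termAbs f β x) :
    x ∈ amoeba f := by
  classical
  obtain ⟨u, hu, husum⟩ := polygon_close f.support.card f.support
    (fun α => termAbs f α x) rfl (fun α hα => termAbs_pos hα x) hbal
  set φ : {a // a ∈ f.support} → ℝ := fun β =>
    Complex.arg (((‖MvPolynomial.coeff β.1 f‖ : ℝ) : ℂ) * u β.1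
      / MvPolynomial.coeff β.1 f) with hφ
  obtain ⟨θ, t', hθt⟩ := solve_system _ hAI φ
  set z : Fin n → ℂ := fun i => Complex.exp ((x i : ℂ) + (θ i : ℂ) * Complex.I) with hz
  have hzne : ∀ i, z i ≠ 0 := fun i => Complex.exp_ne_zero _
  have hzabs : ∀ i, ‖z i‖ = Real.exp (x i) := by
    intro i
    rw [hz]
    simp only []
    rw [Complex.norm_exp]
    congr 1
    simp
  have hzpow : ∀ β : Fin n →₀ ℕ, (∏ i, z i ^ β i)
      = Complex.exp (((∑ i, (β i : ℝ) * x i : ℝ) : ℂ)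
          + ((∑ i, (β i : ℝ) * θ i : ℝ) : ℂ) * Complex.I) := by
    intro β
    have h1 : ∀ i, z i ^ β i
        = Complex.exp ((β i : ℂ) * ((x i : ℂ) + (θ i : ℂ) * Complex.I)) := by
      intro i; rw [hz]; exact (Complex.exp_nat_mul _ _).symm
    rw [Finset.prod_congr rfl fun i _ => h1 i, ← Complex.exp_sum]
    congr 1
    push_cast
    rw [Finset.sum_mul, ← Finset.sum_add_distrib]
    exact Finset.sum_congr rfl fun i _ => by ring
  have hterm : ∀ β ∈ f.support,
      MvPolynomial.coeff β f * ∏ i, z i ^ β i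
        = Complex.exp ((t' : ℂ) * Complex.I) * ((termAbs f β x : ℝ) : ℂ) * u β := by
    intro β hβ
    set a := MvPolynomial.coeff β f with ha'
    have ha : a ≠ 0 := MvPolynomial.mem_support_iff.mp hβ
    have habs : (0:ℝ) < ‖a‖ := by simpa using norm_pos_iff.mpr ha
    set v : ℂ := ((‖a‖ : ℝ) : ℂ) * u β / a with hv
    have hvabs : ‖v‖ = 1 := by
      rw [hv, norm_div, norm_mul, Complex.norm_real, Real.norm_eq_abs, abs_of_pos habs]
      have : ‖u β‖ = 1 := by
        have := hu β hβ; simpa using this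
      rw [this]
      field_simp
    have hexpφ : Complex.exp ((φ ⟨β, hβ⟩ : ℂ) * Complex.I) = v := by
      have h2 := Complex.norm_mul_exp_arg_mul_I v
      rw [hvabs] at h2
      simpa [hφ, hv] using h2
    have hθβ : (∑ i, (β i : ℝ) * θ i) = φ ⟨β, hβ⟩ + t' := hθt ⟨β, hβ⟩
    rw [hzpow β, hθβ]
    push_cast
    rw [add_mul, Complex.exp_add, Complex.exp_add, hexpφ]
    rw [termAbs]
    push_cast
    rw [hv]
    field_simp
    ring
  refine ⟨z, hzne, ?_, ?_⟩
  · rw [MvPolynomial.eval_eq', Finset.sum_congr rfl hterm]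
    have : ∑ β ∈ f.support,
        Complex.exp ((t' : ℂ) * Complex.I) * ((termAbs f β x : ℝ) : ℂ) * u β
        = Complex.exp ((t' : ℂ) * Complex.I)
          * ∑ β ∈ f.support, ((termAbs f β x : ℝ) : ℂ) * u β := by
      rw [Finset.mul_sum]
      exact Finset.sum_congr rfl fun β _ => by ring
    rw [this, husum, mul_zero]
  · intro i
    rw [hzabs i, Real.log_exp]

lemma lopsided_not_mem_amoeba {n : ℕ} (f : MvPolynomial (Fin n) ℂ) (α : Fin n →₀ ℕ)
    (hα : α ∈ f.support) (x : Fin n → ℝ)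
    (h : ∑ β ∈ f.support.erase α, termAbs f β x < termAbs f α x) : x ∉ amoeba f := by
  rintro ⟨z, hzne, heval, hlog⟩
  have hzabs : ∀ i, ‖z i‖ = Real.exp (x i) := by
    intro i
    rw [hlog i, Real.exp_log (norm_pos_iff.mpr (hzne i))]
  have habs : ∀ β : Fin n →₀ ℕ,
      ‖MvPolynomial.coeff β f * ∏ i, z i ^ β i‖ = termAbs f β x := by
    intro β
    rw [norm_mul, termAbs]
    congr 1
    rw [norm_prod]
    have : ∀ i, ‖z i ^ β i‖ = Real.exp ((β i : ℝ) * x i) := by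
      intro i
      rw [norm_pow, hzabs i, ← Real.exp_nat_mul]
    rw [Finset.prod_congr rfl fun i _ => this i, ← Real.exp_sum]
  rw [MvPolynomial.eval_eq'] at heval
  have hsplit : MvPolynomial.coeff α f * ∏ i, z i ^ α i
      = -∑ β ∈ f.support.erase α, MvPolynomial.coeff β f * ∏ i, z i ^ β i := by
    have h2 := Finset.add_sum_erase f.support
      (fun β => MvPolynomial.coeff β f * ∏ i, z i ^ β i) hα
    rw [heval] at h2
    exact eq_neg_of_add_eq_zero_left h2
  have key : termAbs f α x ≤ ∑ β ∈ f.support.erase α, termAbs f β x := by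
    calc termAbs f α x
        = ‖MvPolynomial.coeff α f * ∏ i, z i ^ α i‖ := (habs α).symm
      _ = ‖∑ β ∈ f.support.erase α,
            MvPolynomial.coeff β f * ∏ i, z i ^ β i‖ := by rw [hsplit, norm_neg]
      _ ≤ ∑ β ∈ f.support.erase α,
            ‖MvPolynomial.coeff β f * ∏ i, z i ^ β i‖ :=
          norm_sum_le _ _
      _ = ∑ β ∈ f.support.erase α, termAbs f β x :=
          Finset.sum_congr rfl fun β _ => habs β
  linarith

section ConvHelp

lemma convexOn_finset_sum {ι E : Type*} [AddCommGroup E] [Module ℝ E] (t : Finset ι)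
    (F : ι → E → ℝ) (h : ∀ β ∈ t, ConvexOn ℝ Set.univ (F β)) :
    ConvexOn ℝ Set.univ (fun x => ∑ β ∈ t, F β x) := by
  classical
  induction t using Finset.cons_induction with
  | empty => simpa using convexOn_const (0:ℝ) convex_univ
  | cons a t ha ih =>
    simp only [Finset.sum_cons]
    exact (h a (Finset.mem_cons_self a t)).add
      (ih fun β hβ => h β (Finset.mem_cons.mpr (Or.inr hβ)))

lemma continuous_termAbs {n : ℕ} (f : MvPolynomial (Fin n) ℂ) (α : Fin n →₀ ℕ) :
    Continuous (fun x => termAbs f α x) := by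
  apply Continuous.mul continuous_const
  apply Real.continuous_exp.comp
  exact continuous_finset_sum _ fun i _ => continuous_const.mul (continuous_apply i)

lemma convex_U {n : ℕ} (f : MvPolynomial (Fin n) ℂ) (α : Fin n →₀ ℕ) :
    Convex ℝ {x : Fin n → ℝ | ∑ β ∈ f.support.erase α, termAbs f β x < termAbs f α x} := by
  classical
  set cα : ℝ := ‖MvPolynomial.coeff α f‖ with hcα
  set d : (Fin n →₀ ℕ) → (Fin n → ℝ) := fun β i => (β i : ℝ) - (α i : ℝ) with hd
  set h : (Fin n → ℝ) → ℝ := fun x => ∑ β ∈ f.support.erase α,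
    ‖MvPolynomial.coeff β f‖ * Real.exp (∑ i, d β i * x i) with hh
  have hset : {x : Fin n → ℝ | ∑ β ∈ f.support.erase α, termAbs f β x < termAbs f α x}
      = {x | x ∈ Set.univ ∧ h x < cα} := by
    ext x
    simp only [Set.mem_setOf_eq, Set.mem_univ, true_and]
    have hE : (0:ℝ) < Real.exp (∑ i, (α i : ℝ) * x i) := Real.exp_pos _
    have key : ∀ β : Fin n →₀ ℕ, termAbs f β x
        = (‖MvPolynomial.coeff β f‖ * Real.exp (∑ i, d β i * x i))
          * Real.exp (∑ i, (α i : ℝ) * x i) := by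
      intro β
      rw [termAbs, mul_assoc, ← Real.exp_add]
      congr 2
      rw [← Finset.sum_add_distrib]
      exact Finset.sum_congr rfl fun i _ => by rw [hd]; ring
    have hLHS : ∑ β ∈ f.support.erase α, termAbs f β x
        = h x * Real.exp (∑ i, (α i : ℝ) * x i) := by
      rw [hh, Finset.sum_mul]
      exact Finset.sum_congr rfl fun β _ => key β
    have hRHS : termAbs f α x = cα * Real.exp (∑ i, (α i : ℝ) * x i) := rfl
    rw [hLHS, hRHS]
    exact mul_lt_mul_iff_left₀ hE
  rw [hset]
  refine ConvexOn.convex_lt ?_ cα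
  apply convexOn_finset_sum
  intro β _
  set L : (Fin n → ℝ) →ₗ[ℝ] ℝ := ∑ i, d β i • LinearMap.proj i with hL
  have hLx : ∀ x : Fin n → ℝ, L x = ∑ i, d β i * x i := by
    intro x
    rw [hL]
    simp [LinearMap.sum_apply, LinearMap.smul_apply, LinearMap.proj_apply, smul_eq_mul]
  have h1 : ConvexOn ℝ Set.univ (fun x : Fin n → ℝ => Real.exp (L x)) := by
    have h2 := convexOn_exp.comp_affineMap L.toAffineMap
    exact h2
  have h5 : (fun x : Fin n → ℝ => Real.exp (L x))
      = fun x : Fin n → ℝ => Real.exp (∑ i, d β i * x i) :=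
    funext fun x => by rw [hLx]
  rw [h5] at h1
  exact h1.smul (c := ‖MvPolynomial.coeff β f‖) (by positivity)

end ConvHelp
lemma U_nonempty {n : ℕ} (f : MvPolynomial (Fin n) ℂ)
    (hAI : AffineIndependent ℝ
      (fun β : {a // a ∈ f.support} => (fun i => ((β : Fin n →₀ ℕ) i : ℝ))))
    (α : Fin n →₀ ℕ) (hα : α ∈ f.support) :
    {x : Fin n → ℝ | ∑ β ∈ f.support.erase α, termAbs f β x < termAbs f α x}.Nonempty := by
  classical
  by_cases hE : (f.support.erase α).Nonempty
  swap
  · refine ⟨0, ?_⟩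
    simp only [Set.mem_setOf_eq]
    rw [Finset.not_nonempty_iff_eq_empty.mp hE, Finset.sum_empty]
    exact termAbs_pos hα 0
  set q : Fin n → ℝ := fun i => (α i : ℝ) with hq
  set P : Set (Fin n → ℝ) :=
    (fun β : Fin n →₀ ℕ => fun i : Fin n => (β i : ℝ)) '' ↑(f.support.erase α) with hP
  have hPfin : P.Finite := Set.Finite.image _ (f.support.erase α).finite_toSet
  have hqP : q ∉ convexHull ℝ P := by
    intro hmem
    have hdiff := hAI.notMem_affineSpan_diff ⟨α, hα⟩ Set.univ
    apply hdiff
    have hPsub : P ⊆ (fun β : {a // a ∈ f.support} =>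
        (fun i => ((β : Fin n →₀ ℕ) i : ℝ))) '' (Set.univ \ {⟨α, hα⟩}) := by
      rintro _ ⟨β, hβ, rfl⟩
      have hβ' : β ∈ f.support.erase α := by exact_mod_cast hβ
      refine ⟨⟨β, Finset.mem_of_mem_erase hβ'⟩, ⟨trivial, ?_⟩, rfl⟩
      simp only [Set.mem_singleton_iff]
      intro hcon
      exact (Finset.mem_erase.mp hβ').1 (congrArg Subtype.val hcon)
    exact affineSpan_mono ℝ hPsub (convexHull_subset_affineSpan P hmem)
  obtain ⟨ℓ, r0, hlt, hgt⟩ := geometric_hahn_banach_closed_point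
    (convex_convexHull ℝ P) (hPfin.isCompact_convexHull ℝ).isClosed hqP
  set ε : ℝ := ℓ q - r0 with hε
  have hε0 : 0 < ε := by rw [hε]; linarith
  set v : Fin n → ℝ := fun i => ℓ (fun j => if i = j then 1 else 0) with hv
  have hlin : ∀ y : Fin n → ℝ, ℓ y = ∑ i, y i * v i := by
    intro y
    conv_lhs => rw [pi_eq_sum_univ y]
    rw [map_sum]
    exact Finset.sum_congr rfl fun i _ => by rw [map_smul]; simp [hv, smul_eq_mul]
  set K : ℝ := ∑ β ∈ f.support.erase α, ‖MvPolynomial.coeff β f‖ with hK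
  have hK0 : 0 < K := by
    apply Finset.sum_pos _ hE
    intro β hβ
    have : MvPolynomial.coeff β f ≠ 0 :=
      MvPolynomial.mem_support_iff.mp (Finset.mem_of_mem_erase hβ)
    simpa using norm_pos_iff.mpr this
  set cα : ℝ := ‖MvPolynomial.coeff α f‖ with hcαdef
  have hcα : 0 < cα := by
    have : MvPolynomial.coeff α f ≠ 0 := MvPolynomial.mem_support_iff.mp hα
    rw [hcαdef]; simpa using norm_pos_iff.mpr this
  set c : ℝ := max 0 ((Real.log K - Real.log cα) / ε + 1) with hc
  have hc0 : 0 ≤ c := le_max_left _ _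
  have hcε : Real.log K - Real.log cα < c * ε := by
    have h1 : (Real.log K - Real.log cα) / ε + 1 ≤ c := le_max_right _ _
    calc Real.log K - Real.log cα
        < ((Real.log K - Real.log cα) / ε + 1) * ε := by
          rw [add_mul, div_mul_cancel₀ _ hε0.ne', one_mul]
          linarith
      _ ≤ c * ε := mul_le_mul_of_nonneg_right h1 hε0.le
  refine ⟨c • v, ?_⟩
  simp only [Set.mem_setOf_eq]
  have hxval : ∀ β : Fin n →₀ ℕ,
      ∑ i, (β i : ℝ) * (c • v) i = c * ℓ (fun i => (β i : ℝ)) := by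
    intro β
    rw [hlin, Finset.mul_sum]
    exact Finset.sum_congr rfl fun i _ => by
      simp only [Pi.smul_apply, smul_eq_mul]; ring
  have hamα : termAbs f α (c • v) = cα * Real.exp (c * ℓ q) := by
    rw [termAbs, hxval α]
  have hstep : ∀ β ∈ f.support.erase α, termAbs f β (c • v)
      ≤ ‖MvPolynomial.coeff β f‖ * Real.exp (c * (ℓ q - ε)) := by
    intro β hβ
    rw [termAbs, hxval β]
    apply mul_le_mul_of_nonneg_left _ (by positivity)
    apply Real.exp_le_exp.mpr
    apply mul_le_mul_of_nonneg_left _ hc0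
    have hmemP : (fun i => (β i : ℝ)) ∈ convexHull ℝ P :=
      subset_convexHull ℝ P ⟨β, by exact_mod_cast hβ, rfl⟩
    have := hlt _ hmemP
    rw [hε] at *
    linarith
  calc ∑ β ∈ f.support.erase α, termAbs f β (c • v)
      ≤ ∑ β ∈ f.support.erase α,
          ‖MvPolynomial.coeff β f‖ * Real.exp (c * (ℓ q - ε)) :=
        Finset.sum_le_sum hstep
    _ = K * Real.exp (c * (ℓ q - ε)) := by rw [hK, Finset.sum_mul]
    _ < cα * Real.exp (c * ℓ q) := by
        rw [← Real.exp_log hK0, ← Real.exp_log hcα, ← Real.exp_add, ← Real.exp_add]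
        apply Real.exp_lt_exp.mpr
        have : c * (ℓ q - ε) = c * ℓ q - c * ε := by ring
        rw [this]
        linarith
    _ = termAbs f α (c • v) := hamα.symm
/-- If the support of `f`, viewed in `ℝⁿ`, is affinely independent (so the Newton polytope is a
simplex whose vertex set is the support), then the amoeba of `f` is solid: the number of
connected components of `ℝⁿ ∖ 𝒜_f` equals the cardinality of the support of `f`. -/
theorem simplex_support_solid_amoeba (n : ℕ) (hn : 1 ≤ n)
    (f : MvPolynomial (Fin n) ℂ) (hf : f ≠ 0)
    (hsimplex : AffineIndependent ℝ (Subtype.val : suppR f → (Fin n → ℝ))) :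
    Nat.card (ConnectedComponents ↥((amoeba f)ᶜ)) = f.support.card := by
  classical
  have hAI : AffineIndependent ℝ
      (fun β : {a // a ∈ f.support} => (fun i => ((β : Fin n →₀ ℕ) i : ℝ))) := by
    have htoRinj : Function.Injective
        (fun (β : Fin n →₀ ℕ) => (fun i => (β i : ℝ) : Fin n → ℝ)) := by
      intro β γ hbg
      ext i
      have h := congrFun hbg i
      simp only [] at h
      exact_mod_cast h
    have hemb : Function.Injective (fun β : {a // a ∈ f.support} =>
        (⟨fun i => ((β : Fin n →₀ ℕ) i : ℝ),
          ⟨β.1, by exact_mod_cast β.2, rfl⟩⟩ : suppR f)) := by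
      intro β γ hbg
      exact Subtype.ext (htoRinj (congrArg Subtype.val hbg))
    exact hsimplex.comp_embedding ⟨_, hemb⟩
  set U : (Fin n →₀ ℕ) → Set (Fin n → ℝ) :=
    fun α => {x | ∑ β ∈ f.support.erase α, termAbs f β x < termAbs f α x} with hU
  have hcover : (amoeba f)ᶜ = ⋃ α ∈ f.support, U α := by
    ext x
    simp only [Set.mem_compl_iff, Set.mem_iUnion, hU, Set.mem_setOf_eq]
    constructor
    · intro hx
      by_contra hno
      push_neg at hno
      apply hx
      apply balanced_mem_amoeba f hAI x
      intro α hα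
      have h1 := hno α hα
      have h2 : termAbs f α x + ∑ β ∈ f.support.erase α, termAbs f β x
          = ∑ β ∈ f.support, termAbs f β x :=
        Finset.add_sum_erase f.support (fun γ => termAbs f γ x) hα
      linarith
    · rintro ⟨α, hα, hx⟩
      exact lopsided_not_mem_amoeba f α hα x hx
  refine card_connectedComponents_of_partition f.support U ((amoeba f)ᶜ) hcover
    (fun α _ => ?_) (fun α hα => U_nonempty f hAI α hα)
    (fun α _ => (convex_U f α).isPreconnected) ?_
  · exact isOpen_lt (continuous_finset_sum _ fun β _ => continuous_termAbs f β)
      (continuous_termAbs f α)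
  · intro α hα β hβ hαβ
    rw [Set.disjoint_left]
    intro x hxα hxβ
    simp only [hU, Set.mem_setOf_eq] at hxα hxβ
    have h1 : termAbs f β x ≤ ∑ γ ∈ f.support.erase α, termAbs f γ x :=
      Finset.single_le_sum (f := fun γ => termAbs f γ x)
        (fun γ hγ => (termAbs_pos (Finset.mem_of_mem_erase hγ) x).le)
        (Finset.mem_erase.mpr ⟨Ne.symm hαβ, hβ⟩)
    have h2 : termAbs f α x ≤ ∑ γ ∈ f.support.erase β, termAbs f γ x :=
      Finset.single_le_sum (f := fun γ => termAbs f γ x)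
        (fun γ hγ => (termAbs_pos (Finset.mem_of_mem_erase hγ) x).le)
        (Finset.mem_erase.mpr ⟨hαβ, hα⟩)
    linarith
end

section
/- (Kapranov) Let n ≥ 1 and let g = Σ_{α∈A} a_α X^α be a nonzero polynomial over K with finite support A ⊆ ℕⁿ and all a_α nonzero. Then the set {(val(z₁),…,val(zₙ)) : z ∈ (K∖{0})ⁿ, g(z) = 0} equals the corner locus of the tropical polynomial x ↦ max_{α∈A}(val(a_α) + ⟨α,x⟩), i.e. the set of x ∈ ℝⁿ for which there exist two distinct α, β ∈ A with val(a_α) + ⟨α,x⟩ = val(a_β) + ⟨β,x⟩ = max_{γ∈A}(val(a_γ) + ⟨γ,x⟩), where ⟨·,·⟩ is the Euclidean scalar product on ℝⁿ. -/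
/-- The field of generalized power series over `ℂ` with well-ordered real exponent sets. -/
abbrev K : Type := HahnSeries ℝ ℂ

/-- The valuation `val a = -min (supp a)` (for `a ≠ 0`). -/
noncomputable def Kval (a : K) : ℝ := -(HahnSeries.order a)

namespace Kap

open HahnSeries Polynomial

/-- The additive valuation (order) of a Hahn series. -/
noncomputable def w (a : K) : ℝ := a.order

/-- "order ≥ v" (true for 0). -/
def Wge (a : K) (v : ℝ) : Prop := ∀ e : ℝ, e < v → a.coeff e = 0

/-- "order > v" (true for 0). -/
def Wgt (a : K) (v : ℝ) : Prop := ∀ e : ℝ, e ≤ v → a.coeff e = 0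

lemma Wgt.wge {a : K} {v : ℝ} (h : Wgt a v) : Wge a v := fun e he => h e he.le

lemma wge_zero (v : ℝ) : Wge (0 : K) v := fun _ _ => rfl
lemma wgt_zero (v : ℝ) : Wgt (0 : K) v := fun _ _ => rfl

lemma wge_of_le {a : K} {v v' : ℝ} (h : Wge a v) (hv : v' ≤ v) : Wge a v' :=
  fun e he => h e (lt_of_lt_of_le he hv)

lemma wgt_of_le {a : K} {v v' : ℝ} (h : Wgt a v) (hv : v' ≤ v) : Wgt a v' :=
  fun e he => h e (le_trans he hv)

lemma Wge.wgt_of_lt {a : K} {v v' : ℝ} (h : Wge a v) (hv : v' < v) : Wgt a v' :=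
  fun e he => h e (lt_of_le_of_lt he hv)

lemma wge_order (a : K) : Wge a (a.order) :=
  fun _ he => HahnSeries.coeff_eq_zero_of_lt_order he

lemma wge_iff_le_order {a : K} (ha : a ≠ 0) {v : ℝ} : Wge a v ↔ v ≤ a.order := by
  constructor
  · intro h
    by_contra hlt
    exact (HahnSeries.coeff_order_eq_zero.not.2 ha) (h _ (not_le.mp hlt))
  · intro h
    exact wge_of_le (wge_order a) h

lemma wgt_iff_lt_order {a : K} (ha : a ≠ 0) {v : ℝ} : Wgt a v ↔ v < a.order := by
  constructor
  · intro h
    by_contra hlt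
    exact (HahnSeries.coeff_order_eq_zero.not.2 ha) (h _ (not_lt.mp hlt))
  · intro h e he
    exact HahnSeries.coeff_eq_zero_of_lt_order (lt_of_le_of_lt he h)

lemma Wge.add {a b : K} {v : ℝ} (h1 : Wge a v) (h2 : Wge b v) : Wge (a + b) v := by
  intro e he
  rw [HahnSeries.coeff_add, h1 e he, h2 e he, add_zero]

lemma Wgt.add {a b : K} {v : ℝ} (h1 : Wgt a v) (h2 : Wgt b v) : Wgt (a + b) v := by
  intro e he
  rw [HahnSeries.coeff_add, h1 e he, h2 e he, add_zero]

lemma Wge.neg {a : K} {v : ℝ} (h : Wge a v) : Wge (-a) v := by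
  intro e he; rw [HahnSeries.coeff_neg, h e he, neg_zero]

lemma Wgt.neg {a : K} {v : ℝ} (h : Wgt a v) : Wgt (-a) v := by
  intro e he; rw [HahnSeries.coeff_neg, h e he, neg_zero]

lemma Wge.sub {a b : K} {v : ℝ} (h1 : Wge a v) (h2 : Wge b v) : Wge (a - b) v := by
  rw [sub_eq_add_neg]; exact h1.add h2.neg

lemma Wgt.sub {a b : K} {v : ℝ} (h1 : Wgt a v) (h2 : Wgt b v) : Wgt (a - b) v := by
  rw [sub_eq_add_neg]; exact h1.add h2.neg

lemma wge_sum {ι : Type*} {s : Finset ι} {f : ι → K} {v : ℝ}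
    (h : ∀ i ∈ s, Wge (f i) v) : Wge (∑ i ∈ s, f i) v := by
  classical
  induction s using Finset.induction_on with
  | empty => simpa using wge_zero v
  | insert _ _ hx ih =>
    rw [Finset.sum_insert hx]
    exact (h _ (Finset.mem_insert_self _ _)).add
      (ih fun i hi => h i (Finset.mem_insert_of_mem hi))

lemma wgt_sum {ι : Type*} {s : Finset ι} {f : ι → K} {v : ℝ}
    (h : ∀ i ∈ s, Wgt (f i) v) : Wgt (∑ i ∈ s, f i) v := by
  classical
  induction s using Finset.induction_on with
  | empty => simpa using wgt_zero v
  | insert _ _ hx ih =>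
    rw [Finset.sum_insert hx]
    exact (h _ (Finset.mem_insert_self _ _)).add
      (ih fun i hi => h i (Finset.mem_insert_of_mem hi))

lemma coeff_sum {ι : Type*} (s : Finset ι) (f : ι → K) (e : ℝ) :
    (∑ i ∈ s, f i).coeff e = ∑ i ∈ s, (f i).coeff e := by
  classical
  induction s using Finset.induction_on with
  | empty => simp
  | insert _ _ hx ih => rw [Finset.sum_insert hx, Finset.sum_insert hx, HahnSeries.coeff_add, ih]

lemma Wge.mul {a b : K} {u v : ℝ} (ha : Wge a u) (hb : Wge b v) : Wge (a * b) (u + v) := by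
  rcases eq_or_ne a 0 with rfl | ha0
  · simpa using wge_zero _
  rcases eq_or_ne b 0 with rfl | hb0
  · simpa using wge_zero _
  rw [wge_iff_le_order (mul_ne_zero ha0 hb0), HahnSeries.order_mul ha0 hb0]
  exact add_le_add ((wge_iff_le_order ha0).mp ha) ((wge_iff_le_order hb0).mp hb)

lemma Wge.mul_wgt {a b : K} {u v : ℝ} (ha : Wge a u) (hb : Wgt b v) : Wgt (a * b) (u + v) := by
  rcases eq_or_ne a 0 with rfl | ha0
  · simpa using wgt_zero _
  rcases eq_or_ne b 0 with rfl | hb0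
  · simpa using wgt_zero _
  rw [wgt_iff_lt_order (mul_ne_zero ha0 hb0), HahnSeries.order_mul ha0 hb0]
  exact add_lt_add_of_le_of_lt ((wge_iff_le_order ha0).mp ha) ((wgt_iff_lt_order hb0).mp hb)

lemma Wgt.mul_wge {a b : K} {u v : ℝ} (ha : Wgt a u) (hb : Wge b v) : Wgt (a * b) (u + v) := by
  rw [mul_comm, add_comm]; exact hb.mul_wgt ha

/-- bottom-coefficient multiplicativity -/
lemma coeff_mul_of_wge {a b : K} {u v : ℝ} (ha : Wge a u) (hb : Wge b v) :
    (a * b).coeff (u + v) = a.coeff u * b.coeff v := by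
  rcases eq_or_ne (a.coeff u) 0 with hu | hu
  · have : Wgt a u := by
      intro e he
      rcases lt_or_eq_of_le he with h | h
      · exact ha e h
      · rwa [h]
    rw [hu, zero_mul]
    exact (this.mul_wge hb) _ le_rfl
  rcases eq_or_ne (b.coeff v) 0 with hv | hv
  · have : Wgt b v := by
      intro e he
      rcases lt_or_eq_of_le he with h | h
      · exact hb e h
      · rwa [h]
    rw [hv, mul_zero]
    exact (ha.mul_wgt this) _ le_rfl
  · have ha0 : a ≠ 0 := HahnSeries.ne_zero_of_coeff_ne_zero hu
    have hb0 : b ≠ 0 := HahnSeries.ne_zero_of_coeff_ne_zero hv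
    have hau : a.order = u := le_antisymm (HahnSeries.order_le_of_coeff_ne_zero hu)
      ((wge_iff_le_order ha0).mp ha)
    have hbv : b.order = v := le_antisymm (HahnSeries.order_le_of_coeff_ne_zero hv)
      ((wge_iff_le_order hb0).mp hb)
    have := HahnSeries.coeff_mul_order_add_order a b
    rw [hau, hbv] at this
    rw [this, HahnSeries.leadingCoeff_eq, HahnSeries.leadingCoeff_eq, hau, hbv]

lemma Wge.pow {a : K} {u : ℝ} (ha : Wge a u) (k : ℕ) : Wge (a ^ k) (k * u) := by
  induction k with
  | zero =>
    intro e he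
    simp only [Nat.cast_zero, zero_mul] at he
    rw [pow_zero]
    rw [HahnSeries.coeff_one, if_neg]
    rintro rfl
    exact lt_irrefl _ he
  | succ n ih =>
    have : ((n+1 : ℕ) : ℝ) * u = u + n * u := by push_cast; ring
    rw [pow_succ, mul_comm (a^n) a, this]
    exact ha.mul ih

lemma coeff_pow_of_wge {a : K} {u : ℝ} (ha : Wge a u) (k : ℕ) :
    (a ^ k).coeff (k * u) = (a.coeff u) ^ k := by
  induction k with
  | zero => simp [HahnSeries.coeff_one]
  | succ n ih =>
    have h1 : ((n+1 : ℕ) : ℝ) * u = u + n * u := by push_cast; ring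
    rw [pow_succ, mul_comm (a^n) a, h1, coeff_mul_of_wge ha (ha.pow n), ih, pow_succ,
      mul_comm (a.coeff u ^ n) _]


/-- A polynomial over an algebraically closed field with two nonzero coefficients has a
nonzero root. -/
lemma exists_nonzero_root (F : Polynomial ℂ) {k l : ℕ} (hkl : k < l)
    (hk : F.coeff k ≠ 0) (hl : F.coeff l ≠ 0) : ∃ c : ℂ, c ≠ 0 ∧ F.eval c = 0 := by
  set m := F.natTrailingDegree with hm
  have hF0 : F ≠ 0 := fun h => hk (by simp [h])
  have hdvd : X ^ m ∣ F := X_pow_dvd_iff.mpr fun d hd => coeff_eq_zero_of_lt_natTrailingDegree hd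
  obtain ⟨Q, hQ⟩ := hdvd
  have hQ0 : Q ≠ 0 := fun h => hF0 (by rw [hQ, h, mul_zero])
  have hQc0 : Q.coeff 0 ≠ 0 := by
    have h2 : F.coeff m ≠ 0 := coeff_natTrailingDegree_ne_zero.mpr hF0
    have h3 := coeff_X_pow_mul Q m 0
    rw [zero_add] at h3
    rwa [hQ, h3] at h2
  have hmk : m ≤ k := natTrailingDegree_le_of_ne_zero hk
  have hdegF : l ≤ F.natDegree := le_natDegree_of_ne_zero hl
  have h1 : F.natDegree = m + Q.natDegree := by
    rw [hQ, natDegree_mul (pow_ne_zero m X_ne_zero) hQ0, natDegree_X_pow]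
  have hdegQ : 1 ≤ Q.natDegree := by omega
  have hdQ : Q.degree ≠ 0 := by
    intro h
    have h2 : Q.natDegree = 0 := natDegree_eq_zero_iff_degree_le_zero.mpr (le_of_eq h)
    omega
  obtain ⟨c, hc⟩ := IsAlgClosed.exists_root Q hdQ
  refine ⟨c, fun h => ?_, ?_⟩
  · rw [h] at hc
    rw [IsRoot.def] at hc
    rw [← coeff_zero_eq_eval_zero] at hc
    exact hQc0 hc
  · rw [hQ, eval_mul, hc.eq_zero, mul_zero]


/-- Indices of nonconstant terms of the Taylor expansion of `p` at `z`. -/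
noncomputable def Nset (p : Polynomial K) (z : K) : Finset ℕ :=
  (Polynomial.taylor z p).support.erase 0

lemma taylor_ne_zero {p : Polynomial K} (hp : p ≠ 0) (z : K) : Polynomial.taylor z p ≠ 0 := by
  intro h
  have h2 : Polynomial.taylor (-z) (Polynomial.taylor z p) = p := by
    rw [Polynomial.taylor_taylor, neg_add_cancel, Polynomial.taylor_zero]
  rw [h, map_zero] at h2
  exact hp h2.symm

lemma natDegree_mem_Nset {p : Polynomial K} (hp : 1 ≤ p.natDegree) (z : K) :
    p.natDegree ∈ Nset p z := by
  have hp0 : p ≠ 0 := fun h => by simp [h] at hp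
  have hq : Polynomial.taylor z p ≠ 0 := taylor_ne_zero hp0 z
  refine Finset.mem_erase.mpr ⟨by omega, ?_⟩
  rw [Polynomial.mem_support_iff, ← Polynomial.natDegree_taylor p z]
  exact fun h => hq (Polynomial.leadingCoeff_eq_zero.mp h)

lemma Nset_nonempty {p : Polynomial K} (hp : 1 ≤ p.natDegree) (z : K) :
    (Nset p z).Nonempty := ⟨p.natDegree, natDegree_mem_Nset hp z⟩

lemma coeff_Nset_ne_zero {p : Polynomial K} {z : K} {j : ℕ} (hj : j ∈ Nset p z) :
    (Polynomial.taylor z p).coeff j ≠ 0 :=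
  Polynomial.mem_support_iff.mp (Finset.mem_of_mem_erase hj)

lemma Nset_pos {p : Polynomial K} {z : K} {j : ℕ} (hj : j ∈ Nset p z) : 0 < j :=
  Nat.pos_of_ne_zero (Finset.ne_of_mem_erase hj)

/-- The (largest) critical slope of the Newton polygon of `p` at `z`. -/
noncomputable def tz (p : Polynomial K) (z : K) : ℝ :=
  if h : (Nset p z).Nonempty then
    (Nset p z).sup' h fun j => (w (p.eval z) - w ((Polynomial.taylor z p).coeff j)) / (j : ℝ)
  else 0

lemma tz_eq {p : Polynomial K} {z : K} (h : (Nset p z).Nonempty) :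
    tz p z = (Nset p z).sup' h
      (fun j => (w (p.eval z) - w ((Polynomial.taylor z p).coeff j)) / (j : ℝ)) := by
  unfold tz
  exact dif_pos h

lemma tz_spec_ge {p : Polynomial K} (hp : 1 ≤ p.natDegree) (z : K) {j : ℕ} (hj : j ∈ Nset p z) :
    (w (p.eval z) - w ((Polynomial.taylor z p).coeff j)) / (j : ℝ) ≤ tz p z := by
  rw [tz_eq (Nset_nonempty hp z)]
  exact Finset.le_sup'
    (fun j : ℕ => (w (p.eval z) - w ((Polynomial.taylor z p).coeff j)) / (j : ℝ)) hj

lemma tz_spec_exists {p : Polynomial K} (hp : 1 ≤ p.natDegree) (z : K) :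
    ∃ j ∈ Nset p z, tz p z
      = (w (p.eval z) - w ((Polynomial.taylor z p).coeff j)) / (j : ℝ) := by
  obtain ⟨j, hj, hje⟩ := Finset.exists_mem_eq_sup' (Nset_nonempty hp z)
    (fun j => (w (p.eval z) - w ((Polynomial.taylor z p).coeff j)) / (j : ℝ))
  exact ⟨j, hj, by rw [tz_eq (Nset_nonempty hp z), hje]⟩

lemma T1 {p : Polynomial K} (hp : 1 ≤ p.natDegree) (z : K) {j : ℕ} (hj : j ∈ Nset p z) :
    w (p.eval z) ≤ w ((Polynomial.taylor z p).coeff j) + j * tz p z := by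
  have h := tz_spec_ge hp z hj
  have hj0 : (0:ℝ) < j := by exact_mod_cast Nset_pos hj
  rw [div_le_iff₀ hj0] at h
  nlinarith

lemma T2 {p : Polynomial K} (hp : 1 ≤ p.natDegree) (z : K) :
    ∃ j ∈ Nset p z, w (p.eval z) = w ((Polynomial.taylor z p).coeff j) + j * tz p z := by
  obtain ⟨j, hj, hje⟩ := tz_spec_exists hp z
  refine ⟨j, hj, ?_⟩
  have hj0 : (0:ℝ) < j := by exact_mod_cast Nset_pos hj
  field_simp at hje
  nlinarith [hje]

/-- Taylor expansion of evaluation. -/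
lemma eval_expand (p : Polynomial K) (z y : K) :
    p.eval y = p.eval z + ∑ j ∈ Nset p z, (Polynomial.taylor z p).coeff j * (y - z) ^ j := by
  have h := Polynomial.taylor_eval z p (y - z)
  rw [sub_add_cancel] at h
  conv_lhs => rw [← h]
  rw [Polynomial.eval_eq_sum, Polynomial.sum_def]
  by_cases h0 : 0 ∈ (Polynomial.taylor z p).support
  · rw [← Finset.add_sum_erase _ _ h0, Polynomial.taylor_coeff_zero, pow_zero, mul_one]
    rfl
  · rw [Nset, Finset.erase_eq_of_notMem h0]
    have : p.eval z = 0 := by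
      rw [← Polynomial.taylor_coeff_zero z p]
      exact Polynomial.notMem_support_iff.mp h0
    rw [this, zero_add]

/-- Newton step: there is an increment of order exactly `tz p z` strictly improving the value. -/
lemma newton_step {p : Polynomial K} (hp : 1 ≤ p.natDegree) (z : K) (hz : p.eval z ≠ 0) :
    ∃ h : K, h ≠ 0 ∧ h.order = tz p z ∧ Wgt (p.eval (z + h)) (w (p.eval z)) := by
  classical
  have hq : ∀ j : ℕ, (Polynomial.taylor z p).coeff j = (Polynomial.taylor z p).coeff j := fun _ => rfl
  set E := (Nset p z).filter
    (fun j => w ((Polynomial.taylor z p).coeff j) + j * tz p z = w (p.eval z)) with hEdef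
  set F : Polynomial ℂ := Polynomial.C ((p.eval z).coeff (w (p.eval z)))
      + ∑ j ∈ E, Polynomial.C (((Polynomial.taylor z p).coeff j).coeff
          (w (p.eval z) - j * tz p z)) * Polynomial.X ^ j with hFdef
  have hEsub : E ⊆ Nset p z := Finset.filter_subset _ _
  -- coefficients of F
  have hFcoeff : ∀ m : ℕ, 0 < m →
      F.coeff m = if m ∈ E then ((Polynomial.taylor z p).coeff m).coeff
        (w (p.eval z) - m * tz p z) else 0 := by
    intro m hm
    rw [hFdef, Polynomial.coeff_add, Polynomial.coeff_C, if_neg (by omega),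
      Polynomial.finset_sum_coeff, zero_add]
    by_cases hmE : m ∈ E
    · rw [if_pos hmE, Finset.sum_eq_single_of_mem m hmE]
      · rw [Polynomial.coeff_C_mul, Polynomial.coeff_X_pow, if_pos rfl, mul_one]
      · intro b _ hbm
        rw [Polynomial.coeff_C_mul, Polynomial.coeff_X_pow, if_neg (fun hh => hbm hh.symm),
          mul_zero]
    · rw [if_neg hmE]
      apply Finset.sum_eq_zero
      intro b hb
      rw [Polynomial.coeff_C_mul, Polynomial.coeff_X_pow, if_neg, mul_zero]
      intro hh; rw [← hh] at hb; exact hmE hb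
  have hF0 : F.coeff 0 = (p.eval z).coeff (w (p.eval z)) := by
    rw [hFdef, Polynomial.coeff_add, Polynomial.coeff_C, if_pos rfl, Polynomial.finset_sum_coeff]
    have : ∀ j ∈ E, (Polynomial.C (((Polynomial.taylor z p).coeff j).coeff
        (w (p.eval z) - j * tz p z)) * Polynomial.X ^ j).coeff 0
        = 0 := by
      intro j hj
      have := Nset_pos (hEsub hj)
      rw [Polynomial.coeff_C_mul, Polynomial.coeff_X_pow, if_neg (by omega), mul_zero]
    rw [Finset.sum_eq_zero this, add_zero]
  have hF0ne : F.coeff 0 ≠ 0 := by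
    rw [hF0]
    exact (HahnSeries.coeff_order_eq_zero.not.2 hz)
  obtain ⟨js, hjs, hjseq⟩ := T2 hp z
  have hjsE : js ∈ E := Finset.mem_filter.mpr ⟨hjs, by linarith [hjseq]⟩
  have hwjs : w ((Polynomial.taylor z p).coeff js) = w (p.eval z) - js * tz p z := by
    linarith [hjseq]
  have hFjs : F.coeff js ≠ 0 := by
    rw [hFcoeff js (Nset_pos hjs), if_pos hjsE, ← hwjs]
    exact (HahnSeries.coeff_order_eq_zero.not.2 (coeff_Nset_ne_zero hjs))
  obtain ⟨c, hc0, hcF⟩ := exists_nonzero_root F (Nset_pos hjs) hF0ne hFjs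
  set h : K := HahnSeries.single (tz p z) c with hhdef
  have hh0 : h ≠ 0 := HahnSeries.single_ne_zero hc0
  have hhord : h.order = tz p z := HahnSeries.order_single hc0
  have hhwge : Wge h (tz p z) := by rw [← hhord]; exact wge_order h
  have hhcoeff : h.coeff (tz p z) = c := HahnSeries.coeff_single_same _ c
  refine ⟨h, hh0, hhord, ?_⟩
  have hexp := eval_expand p z (z + h)
  rw [add_sub_cancel_left] at hexp
  -- order bound for each term
  have hterm : ∀ j ∈ Nset p z, Wge ((Polynomial.taylor z p).coeff j * h ^ j)
      (w ((Polynomial.taylor z p).coeff j) + j * tz p z) :=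
    fun j hj => (wge_order ((Polynomial.taylor z p).coeff j)).mul (hhwge.pow j)
  intro e he
  rw [hexp, HahnSeries.coeff_add, coeff_sum]
  rcases lt_or_eq_of_le he with hlt | heq
  · rw [HahnSeries.coeff_eq_zero_of_lt_order hlt, zero_add]
    apply Finset.sum_eq_zero
    intro j hj
    exact hterm j hj e (lt_of_lt_of_le hlt (T1 hp z hj))
  · subst heq
    -- sum over Nset = sum over E
    have hsum : ∑ j ∈ Nset p z, ((Polynomial.taylor z p).coeff j * h ^ j).coeff (w (p.eval z))
        = ∑ j ∈ E, ((Polynomial.taylor z p).coeff j).coeff (w (p.eval z) - j * tz p z) * c ^ j := by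
      rw [← Finset.sum_subset hEsub]
      · apply Finset.sum_congr rfl
        intro j hj
        have hwq : w ((Polynomial.taylor z p).coeff j) = w (p.eval z) - j * tz p z := by
          have := (Finset.mem_filter.mp hj).2
          linarith
        have hwge2 : Wge ((Polynomial.taylor z p).coeff j) (w (p.eval z) - j * tz p z) := by
          rw [← hwq]; exact wge_order _
        have hv : w (p.eval z) = (w (p.eval z) - j * tz p z) + j * tz p z := by ring
        rw [hv, coeff_mul_of_wge hwge2 (hhwge.pow j), coeff_pow_of_wge hhwge, hhcoeff]
        ring_nf
      · intro j hj hjE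
        have hstrict : w (p.eval z) < w ((Polynomial.taylor z p).coeff j) + j * tz p z := by
          rcases lt_or_eq_of_le (T1 hp z hj) with hh | hh
          · exact hh
          · exact absurd (Finset.mem_filter.mpr ⟨hj, hh.symm⟩) hjE
        exact hterm j hj _ hstrict
    rw [hsum]
    -- evaluate F at c
    have hFeval : F.eval c = (p.eval z).coeff (w (p.eval z))
        + ∑ j ∈ E, ((Polynomial.taylor z p).coeff j).coeff (w (p.eval z) - j * tz p z) * c ^ j := by
      rw [hFdef, Polynomial.eval_add, Polynomial.eval_C, Polynomial.eval_finset_sum]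
      congr 1
      apply Finset.sum_congr rfl
      intro j hj
      rw [Polynomial.eval_mul, Polynomial.eval_C, Polynomial.eval_pow, Polynomial.eval_X]
    rw [← hFeval]
    exact hcF

/-- Lower bound on the critical slope from comparison of two points. -/
lemma tz_lb {p : Polynomial K} (hp : 1 ≤ p.natDegree) {z z' : K} {s : ℝ}
    (hz : p.eval z ≠ 0) (hz' : p.eval z' ≠ 0) (hne : z ≠ z')
    (hs : Wge (z - z') s) (hlt : w (p.eval z) < w (p.eval z')) : s < tz p z' := by
  have hzz' : z - z' ≠ 0 := sub_ne_zero_of_ne hne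
  have hords : s ≤ (z - z').order := (wge_iff_le_order hzz').mp hs
  -- find j₀
  have hex : ∃ j ∈ Nset p z', w ((Polynomial.taylor z' p).coeff j) + j * s ≤ w (p.eval z) := by
    by_contra hcon
    push_neg at hcon
    have hexp := eval_expand p z' z
    have hwgt : Wgt (p.eval z) (w (p.eval z)) := by
      intro e he
      rw [hexp, HahnSeries.coeff_add, coeff_sum]
      have h1 : (p.eval z').coeff e = 0 := by
        apply HahnSeries.coeff_eq_zero_of_lt_order
        exact lt_of_le_of_lt he hlt
      rw [h1, zero_add]
      apply Finset.sum_eq_zero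
      intro j hj
      have hterm : Wge ((Polynomial.taylor z' p).coeff j * (z - z') ^ j)
          (w ((Polynomial.taylor z' p).coeff j) + j * s) :=
        (wge_order _).mul ((wge_of_le (wge_order (z - z')) hords).pow j)
      exact hterm e (lt_of_le_of_lt he (hcon j hj))
    exact (HahnSeries.coeff_order_eq_zero.not.2 hz) (hwgt _ le_rfl)
  obtain ⟨j₀, hj₀, hj₀le⟩ := hex
  have hj0pos : (0:ℝ) < j₀ := by exact_mod_cast Nset_pos hj₀
  have h2 := tz_spec_ge hp z' hj₀
  rw [div_le_iff₀ hj0pos] at h2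
  nlinarith


lemma wge_one : Wge (1 : K) 0 := by
  intro e he
  rw [HahnSeries.coeff_one, if_neg]
  rintro rfl; exact lt_irrefl _ he

lemma coeff_one_zero : (1 : K).coeff 0 = 1 := by rw [HahnSeries.coeff_one, if_pos rfl]

lemma wge_prod {ι : Type*} {s : Finset ι} {f : ι → K} {v : ι → ℝ}
    (h : ∀ i ∈ s, Wge (f i) (v i)) : Wge (∏ i ∈ s, f i) (∑ i ∈ s, v i) := by
  classical
  induction s using Finset.induction_on with
  | empty => simpa using wge_one
  | insert _ _ hx ih =>
    rw [Finset.prod_insert hx, Finset.sum_insert hx]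
    exact (h _ (Finset.mem_insert_self _ _)).mul
      (ih fun i hi => h i (Finset.mem_insert_of_mem hi))

lemma coeff_prod_of_wge {ι : Type*} {s : Finset ι} {f : ι → K} {v : ι → ℝ}
    (h : ∀ i ∈ s, Wge (f i) (v i)) :
    (∏ i ∈ s, f i).coeff (∑ i ∈ s, v i) = ∏ i ∈ s, (f i).coeff (v i) := by
  classical
  induction s using Finset.induction_on with
  | empty => simpa using coeff_one_zero
  | insert _ _ hx ih =>
    rw [Finset.prod_insert hx, Finset.sum_insert hx, Finset.prod_insert hx,
      coeff_mul_of_wge (h _ (Finset.mem_insert_self _ _))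
        (wge_prod fun i hi => h i (Finset.mem_insert_of_mem hi)),
      ih fun i hi => h i (Finset.mem_insert_of_mem hi)]

/-- coefficient extraction from `∑ C u_j X^j` (over any commutative ring). -/
lemma coeff_sum_CXpow {R : Type*} [CommRing R] (E : Finset ℕ) (u : ℕ → R) (m : ℕ) :
    (∑ j ∈ E, Polynomial.C (u j) * Polynomial.X ^ j).coeff m
      = if m ∈ E then u m else 0 := by
  classical
  rw [Polynomial.finset_sum_coeff]
  by_cases hmE : m ∈ E
  · rw [if_pos hmE, Finset.sum_eq_single_of_mem m hmE]
    · rw [Polynomial.coeff_C_mul, Polynomial.coeff_X_pow, if_pos rfl, mul_one]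
    · intro b _ hbm
      rw [Polynomial.coeff_C_mul, Polynomial.coeff_X_pow, if_neg (fun hh => hbm hh.symm),
        mul_zero]
  · rw [if_neg hmE]
    apply Finset.sum_eq_zero
    intro b hb
    rw [Polynomial.coeff_C_mul, Polynomial.coeff_X_pow, if_neg, mul_zero]
    intro hh; rw [← hh] at hb; exact hmE hb

/-- Genericity: one can choose nonzero constants making two given "monomial sums" nonzero. -/
lemma exists_generic {n : ℕ} (s : Finset (Fin n)) (B1 B2 : Finset (Fin n → ℕ))
    (hB1 : B1.Nonempty) (hB2 : B2.Nonempty) (u : (Fin n → ℕ) → ℂ)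
    (hu1 : ∀ γ ∈ B1, u γ ≠ 0) (hu2 : ∀ γ ∈ B2, u γ ≠ 0)
    (hinj1 : ∀ γ ∈ B1, ∀ γ' ∈ B1, (∀ i ∈ s, γ i = γ' i) → γ = γ')
    (hinj2 : ∀ γ ∈ B2, ∀ γ' ∈ B2, (∀ i ∈ s, γ i = γ' i) → γ = γ') :
    ∃ c : Fin n → ℂ, (∀ i, c i ≠ 0) ∧
      (∑ γ ∈ B1, u γ * ∏ i ∈ s, c i ^ γ i) ≠ 0 ∧
      (∑ γ ∈ B2, u γ * ∏ i ∈ s, c i ^ γ i) ≠ 0 := by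
  classical
  set res : (Fin n → ℕ) → ((Fin n) →₀ ℕ) := fun γ =>
    Finsupp.equivFunOnFinite.symm (fun i => if i ∈ s then γ i else 0) with hres
  have hresapp : ∀ γ i, res γ i = if i ∈ s then γ i else 0 := by
    intro γ i; simp [hres]
  set G : Finset (Fin n → ℕ) → MvPolynomial (Fin n) ℂ := fun B =>
    ∑ γ ∈ B, MvPolynomial.monomial (res γ) (u γ) with hG
  have hGeval : ∀ B (c : Fin n → ℂ),
      MvPolynomial.eval c (G B) = ∑ γ ∈ B, u γ * ∏ i ∈ s, c i ^ γ i := by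
    intro B c
    rw [hG, map_sum]
    apply Finset.sum_congr rfl
    intro γ hγ
    rw [MvPolynomial.eval_monomial]
    congr 1
    rw [Finsupp.prod_pow]
    rw [← Finset.prod_subset (Finset.subset_univ s)]
    · apply Finset.prod_congr rfl
      intro i hi
      rw [hresapp, if_pos hi]
    · intro i _ hi
      rw [hresapp, if_neg hi, pow_zero]
  have hGne : ∀ (B : Finset (Fin n → ℕ)), B.Nonempty → (∀ γ ∈ B, u γ ≠ 0) →
      (∀ γ ∈ B, ∀ γ' ∈ B, (∀ i ∈ s, γ i = γ' i) → γ = γ') → G B ≠ 0 := by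
    intro B hB hu hinj hzero
    obtain ⟨γ₀, hγ₀⟩ := hB
    have hcoeff : MvPolynomial.coeff (res γ₀) (G B) = u γ₀ := by
      rw [hG, MvPolynomial.coeff_sum, Finset.sum_eq_single_of_mem γ₀ hγ₀]
      · rw [MvPolynomial.coeff_monomial, if_pos rfl]
      · intro γ hγ hne
        rw [MvPolynomial.coeff_monomial, if_neg]
        intro hres2
        apply hne
        apply hinj γ hγ γ₀ hγ₀
        intro i hi
        have h5 : res γ i = res γ₀ i := by rw [hres2]
        rw [hresapp, hresapp, if_pos hi, if_pos hi] at h5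
        exact h5
    rw [hzero, MvPolynomial.coeff_zero] at hcoeff
    exact hu γ₀ hγ₀ hcoeff.symm
  set H : MvPolynomial (Fin n) ℂ := G B1 * G B2 * ∏ i : Fin n, MvPolynomial.X i with hH
  have hHne : H ≠ 0 := by
    apply mul_ne_zero (mul_ne_zero (hGne B1 hB1 hu1 hinj1) (hGne B2 hB2 hu2 hinj2))
    apply Finset.prod_ne_zero_iff.mpr
    intro i _
    exact MvPolynomial.X_ne_zero i
  have : ∃ c : Fin n → ℂ, MvPolynomial.eval c H ≠ 0 := by
    by_contra hcon
    push_neg at hcon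
    exact hHne (MvPolynomial.funext fun c => by rw [hcon c, map_zero])
  obtain ⟨c, hc⟩ := this
  rw [hH, map_mul, map_mul, map_prod] at hc
  simp only [MvPolynomial.eval_X] at hc
  refine ⟨c, ?_, ?_, ?_⟩
  · intro i hzero
    apply hc
    rw [Finset.prod_eq_zero (Finset.mem_univ i) hzero, mul_zero]
  · intro hzero
    apply hc
    rw [← hGeval B1 c] at hzero
    rw [hzero, zero_mul, zero_mul]
  · intro hzero
    apply hc
    rw [← hGeval B2 c] at hzero
    rw [hzero, mul_zero, zero_mul]


/-- Spherical completeness of `K` (limit of a nested coherent family). -/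
lemma exists_limit (C : Set K) (t : K → ℝ)
    (hagree : ∀ z ∈ C, ∀ z' ∈ C, ∀ e : ℝ, e < t z → e < t z' → z.coeff e = z'.coeff e) :
    ∃ y : K, ∀ z ∈ C, ∀ e : ℝ, e < t z → y.coeff e = z.coeff e := by
  classical
  set P : ℝ → Prop := fun e => ∃ z, z ∈ C ∧ e < t z with hP
  set f : ℝ → ℂ := fun e => if h : P e then (Classical.choose h).coeff e else 0 with hfdef
  have hf : ∀ (e : ℝ), ∀ z ∈ C, e < t z → f e = z.coeff e := by
    intro e z hz he
    have hPe : P e := ⟨z, hz, he⟩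
    obtain ⟨hz', ht'⟩ := Classical.choose_spec hPe
    simp only [hfdef, dif_pos hPe]
    exact hagree _ hz' _ hz e ht' he
  have hsupp : (Function.support f).IsWF := by
    rw [Set.isWF_iff_no_descending_seq]
    intro g hg hmem
    have h0 : f (g 0) ≠ 0 := hmem 0
    have hP0 : P (g 0) := by
      by_contra hcon
      exact h0 (by simp only [hfdef, dif_neg hcon])
    obtain ⟨z₀, hz₀, ht₀⟩ := hP0
    have hall : ∀ n, g n ∈ z₀.support := by
      intro n
      have hle : g n ≤ g 0 := hg.antitone (Nat.zero_le n)
      have hlt : g n < t z₀ := lt_of_le_of_lt hle ht₀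
      have heq := hf (g n) z₀ hz₀ hlt
      rw [HahnSeries.mem_support]
      intro hzero
      apply hmem n
      show f (g n) = 0
      rw [heq, hzero]
    exact (Set.isWF_iff_no_descending_seq.mp z₀.isWF_support) g hg hall
  refine ⟨⟨f, hsupp.isPWO⟩, ?_⟩
  intro z hz e he
  exact hf e z hz he

/-- Main one-variable theorem: a Newton-polygon corner of `p` at `τ` yields a nonzero root
of order `τ`. -/
theorem onevar {p : Polynomial K} {τ : ℝ} {k l : ℕ} (hkl : k < l)
    (hk : p.coeff k ≠ 0) (hl : p.coeff l ≠ 0)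
    (heq : w (p.coeff k) + k * τ = w (p.coeff l) + l * τ)
    (hmin : ∀ j, p.coeff j ≠ 0 → w (p.coeff k) + k * τ ≤ w (p.coeff j) + j * τ) :
    ∃ r : K, r ≠ 0 ∧ r.order = τ ∧ p.eval r = 0 := by
  classical
  have hp0 : p ≠ 0 := fun h => hk (by simp [h])
  have hp : 1 ≤ p.natDegree := by
    have h1 := Polynomial.le_natDegree_of_ne_zero hl
    omega
  set V := w (p.coeff k) + k * τ with hVdef
  set S₀ := p.support.filter (fun j => w (p.coeff j) + j * τ = V) with hS₀def
  have hkS : k ∈ S₀ := Finset.mem_filter.mpr ⟨Polynomial.mem_support_iff.mpr hk, rfl⟩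
  have hlS : l ∈ S₀ := Finset.mem_filter.mpr ⟨Polynomial.mem_support_iff.mpr hl, heq.symm⟩
  set F₀ : Polynomial ℂ :=
    ∑ j ∈ S₀, Polynomial.C ((p.coeff j).coeff (V - j * τ)) * Polynomial.X ^ j with hF₀def
  have hF₀coeff : ∀ m : ℕ, F₀.coeff m
      = if m ∈ S₀ then (p.coeff m).coeff (V - m * τ) else 0 := by
    intro m
    rw [hF₀def, Polynomial.finset_sum_coeff]
    by_cases hmE : m ∈ S₀
    · rw [if_pos hmE, Finset.sum_eq_single_of_mem m hmE]
      · rw [Polynomial.coeff_C_mul, Polynomial.coeff_X_pow, if_pos rfl, mul_one]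
      · intro b _ hbm
        rw [Polynomial.coeff_C_mul, Polynomial.coeff_X_pow, if_neg (fun hh => hbm hh.symm),
          mul_zero]
    · rw [if_neg hmE]
      apply Finset.sum_eq_zero
      intro b hb
      rw [Polynomial.coeff_C_mul, Polynomial.coeff_X_pow, if_neg, mul_zero]
      intro hh; rw [← hh] at hb; exact hmE hb
  have hleadS : ∀ m ∈ S₀, (p.coeff m).coeff (V - m * τ) ≠ 0 := by
    intro m hm
    obtain ⟨hms, hmv⟩ := Finset.mem_filter.mp hm
    have hm0 : p.coeff m ≠ 0 := Polynomial.mem_support_iff.mp hms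
    have : V - m * τ = (p.coeff m).order := by
      have : w (p.coeff m) = V - m * τ := by linarith [hmv]
      rw [← this]; rfl
    rw [this]
    exact (HahnSeries.coeff_order_eq_zero.not.2 hm0)
  have hF₀k : F₀.coeff k ≠ 0 := by rw [hF₀coeff k, if_pos hkS]; exact hleadS k hkS
  have hF₀l : F₀.coeff l ≠ 0 := by rw [hF₀coeff l, if_pos hlS]; exact hleadS l hlS
  -- evaluation at a monomial of order τ
  have heval : ∀ c : ℂ, c ≠ 0 →
      (Wge (p.eval (HahnSeries.single τ c)) V ∧
       (p.eval (HahnSeries.single τ c)).coeff V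
         = ∑ j ∈ S₀, (p.coeff j).coeff (V - j * τ) * c ^ j) := by
    intro c hc
    set y : K := HahnSeries.single τ c with hydef
    have hywge : Wge y τ := by
      rw [wge_iff_le_order (HahnSeries.single_ne_zero hc), HahnSeries.order_single hc]
    have hycoeff : y.coeff τ = c := HahnSeries.coeff_single_same τ c
    have hev : p.eval y = ∑ j ∈ p.support, p.coeff j * y ^ j := by
      rw [Polynomial.eval_eq_sum, Polynomial.sum_def]
    have hterm : ∀ j ∈ p.support, Wge (p.coeff j * y ^ j) (w (p.coeff j) + j * τ) :=
      fun j hj => (wge_order (p.coeff j)).mul (hywge.pow j)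
    constructor
    · rw [hev]
      apply wge_sum
      intro j hj
      exact wge_of_le (hterm j hj) (hmin j (Polynomial.mem_support_iff.mp hj))
    · have hS₀sub : S₀ ⊆ p.support := by rw [hS₀def]; exact Finset.filter_subset _ _
      rw [hev, coeff_sum, ← Finset.sum_subset hS₀sub]
      · apply Finset.sum_congr rfl
        intro j hj
        have hwq : w (p.coeff j) = V - j * τ := by
          have := (Finset.mem_filter.mp hj).2
          linarith
        have hwge2 : Wge (p.coeff j) (V - j * τ) := by
          rw [← hwq]; exact wge_order _
        have hv : V = (V - j * τ) + j * τ := by ring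
        rw [hv, coeff_mul_of_wge hwge2 (hywge.pow j), coeff_pow_of_wge hywge, hycoeff]
        ring_nf
      · intro j hj hjE
        have hj0 : p.coeff j ≠ 0 := Polynomial.mem_support_iff.mp hj
        have hstrict : V < w (p.coeff j) + j * τ := by
          rcases lt_or_eq_of_le (hmin j hj0) with hh | hh
          · exact hh
          · exact absurd (Finset.mem_filter.mpr ⟨hj, hh.symm⟩) hjE
        exact hterm j hj V hstrict
  -- the F₀-evaluation identity
  have hF₀eval : ∀ c : ℂ, F₀.eval c = ∑ j ∈ S₀, (p.coeff j).coeff (V - j * τ) * c ^ j := by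
    intro c
    rw [hF₀def, Polynomial.eval_finset_sum]
    apply Finset.sum_congr rfl
    intro j hj
    rw [Polynomial.eval_mul, Polynomial.eval_C, Polynomial.eval_pow, Polynomial.eval_X]
  -- initial point z₀
  obtain ⟨c₀, hc₀, hc₀root⟩ := exists_nonzero_root F₀ hkl hF₀k hF₀l
  set z₀ : K := HahnSeries.single τ c₀ with hz₀def
  have hz₀wgt : Wgt (p.eval z₀) V := by
    obtain ⟨hwge, hcoeffV⟩ := heval c₀ hc₀
    intro e he
    rcases lt_or_eq_of_le he with hlt | heq'
    · exact hwge e hlt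
    · subst heq'
      rw [hcoeffV, ← hF₀eval, hc₀root]
  -- points below z₀ are nonzero of order τ; assume none is a root
  have horder : ∀ y : K, Wgt (y - z₀) τ → y ≠ 0 ∧ y.order = τ := by
    intro y hy
    have hyτ : y.coeff τ = c₀ := by
      have h1 : (y - z₀).coeff τ = 0 := hy τ le_rfl
      rw [HahnSeries.coeff_sub] at h1
      have h2 : z₀.coeff τ = c₀ := HahnSeries.coeff_single_same τ c₀
      rw [h2] at h1
      linear_combination h1
    have hy0 : y ≠ 0 := HahnSeries.ne_zero_of_coeff_ne_zero (by rw [hyτ]; exact hc₀)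
    refine ⟨hy0, le_antisymm (HahnSeries.order_le_of_coeff_ne_zero (by rw [hyτ]; exact hc₀)) ?_⟩
    rw [← wge_iff_le_order hy0]
    intro e he
    have h1 : (y - z₀).coeff e = 0 := hy e he.le
    rw [HahnSeries.coeff_sub] at h1
    have h2 : z₀.coeff e = 0 := HahnSeries.coeff_single_of_ne (ne_of_lt he)
    rw [h2] at h1
    linear_combination h1
  by_contra hroot
  push_neg at hroot
  have hnonroot : ∀ y : K, Wgt (y - z₀) τ → p.eval y ≠ 0 := by
    intro y hy hev
    obtain ⟨hy0, hyord⟩ := horder y hy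
    exact hroot y hy0 hyord hev
  have hz₀nr : p.eval z₀ ≠ 0 := hnonroot z₀ (by rw [sub_self]; exact wgt_zero τ)
  have hz₀V : V < w (p.eval z₀) := (wgt_iff_lt_order hz₀nr).mp hz₀wgt
  -- initial slope bound : τ < tz p z₀
  have ht₀ : τ < tz p z₀ := by
    have hF₀ne : F₀ ≠ 0 := fun h => hF₀k (by rw [h]; simp)
    have hfin : {x : ℂ | F₀.IsRoot x}.Finite := Polynomial.finite_setOf_isRoot hF₀ne
    obtain ⟨c₁, hc₁⟩ := Infinite.exists_notMem_finset (hfin.toFinset ∪ {c₀, 0})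
    simp only [Finset.mem_union, Finset.mem_insert, Finset.mem_singleton, Set.Finite.mem_toFinset,
      Set.mem_setOf_eq, not_or] at hc₁
    obtain ⟨hc₁root, hc₁c₀, hc₁0⟩ := hc₁
    set y : K := HahnSeries.single τ c₁ with hydef
    obtain ⟨hywge, hycoeffV⟩ := heval c₁ hc₁0
    have hyV : (p.eval y).coeff V ≠ 0 := by
      rw [hycoeffV, ← hF₀eval]
      exact hc₁root
    have hynz : p.eval y ≠ 0 := HahnSeries.ne_zero_of_coeff_ne_zero hyV
    have hyord : w (p.eval y) = V :=
      le_antisymm (HahnSeries.order_le_of_coeff_ne_zero hyV) ((wge_iff_le_order hynz).mp hywge)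
    have hyne : y ≠ z₀ := by
      intro h
      apply hc₁c₀
      have := congrArg (fun u : K => u.coeff τ) h
      simpa [hydef, hz₀def, HahnSeries.coeff_single_same] using this
    have hs : Wge (y - z₀) τ := by
      have : y - z₀ = HahnSeries.single τ (c₁ - c₀) := by
        rw [hydef, hz₀def]
        ext e
        by_cases he : e = τ <;> simp [HahnSeries.coeff_sub, HahnSeries.coeff_single, he]
      rw [this, wge_iff_le_order (HahnSeries.single_ne_zero (sub_ne_zero_of_ne hc₁c₀)),
        HahnSeries.order_single (sub_ne_zero_of_ne hc₁c₀)]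
    exact tz_lb hp hynz hz₀nr hyne hs (by rw [hyord]; exact hz₀V)
  -- the partially ordered set of good approximations
  set Good : K → Prop := fun y => Wgt (y - z₀) τ ∧ τ < tz p y ∧ w (p.eval z₀) ≤ w (p.eval y)
    with hGood
  have hGoodnr : ∀ y : K, Good y → p.eval y ≠ 0 := fun y hy => hnonroot y hy.1
  have hGoodz₀ : Good z₀ := ⟨by rw [sub_self]; exact wgt_zero τ, ht₀, le_rfl⟩
  set T := {y : K // Good y} with hT
  haveI : Nonempty T := ⟨⟨z₀, hGoodz₀⟩⟩
  set r : T → T → Prop := fun a b => a = b ∨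
    (Wge (b.1 - a.1) (tz p a.1) ∧ w (p.eval a.1) < w (p.eval b.1)) with hr
  -- key step comparison
  have hstep : ∀ a b : T, Wge (b.1 - a.1) (tz p a.1) → w (p.eval a.1) < w (p.eval b.1) →
      tz p a.1 < tz p b.1 := by
    intro a b hwge hlt
    have hne : a.1 ≠ b.1 := fun h => absurd (congrArg (fun u => w (p.eval u)) h) (ne_of_lt hlt)
    exact tz_lb hp (hGoodnr a.1 a.2) (hGoodnr b.1 b.2) hne
      (by have := hwge.neg; rwa [neg_sub] at this) hlt
  have htrans : ∀ a b c : T, r a b → r b c → r a c := by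
    intro a b c hab hbc
    rcases hab with rfl | ⟨hab1, hab2⟩
    · exact hbc
    rcases hbc with rfl | ⟨hbc1, hbc2⟩
    · exact Or.inr ⟨hab1, hab2⟩
    refine Or.inr ⟨?_, lt_trans hab2 hbc2⟩
    have h1 : c.1 - a.1 = (c.1 - b.1) + (b.1 - a.1) := by ring
    rw [h1]
    exact (wge_of_le hbc1 (le_of_lt (hstep a b hab1 hab2))).add hab1
  -- chains are bounded
  have hchain : ∀ c : Set T, IsChain r c → ∃ ub, ∀ a ∈ c, r a ub := by
    intro c hc
    rcases Set.eq_empty_or_nonempty c with rfl | ⟨x₁, hx₁⟩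
    · exact ⟨⟨z₀, hGoodz₀⟩, by simp⟩
    by_cases hmax : ∃ m ∈ c, ∀ x ∈ c, r x m
    · obtain ⟨m, hm, hmax⟩ := hmax
      exact ⟨m, hmax⟩
    push_neg at hmax
    -- every element has a strict successor in the chain
    have hsucc : ∀ x ∈ c, ∃ x' ∈ c, Wge (x'.1 - x.1) (tz p x.1)
        ∧ w (p.eval x.1) < w (p.eval x'.1) := by
      intro x hx
      obtain ⟨x', hx', hnr⟩ := hmax x hx
      have hne : x' ≠ x := fun h => hnr (Or.inl h)
      rcases hc hx' hx (fun h => hnr (Or.inl h)) with h | h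
      · exact absurd h hnr
      · rcases h with rfl | ⟨h1, h2⟩
        · exact absurd rfl hne
        · exact ⟨x', hx', h1, h2⟩
    -- the underlying set in K
    set C : Set K := Subtype.val '' c with hC
    have hagree : ∀ z ∈ C, ∀ z' ∈ C, ∀ e : ℝ, e < tz p z → e < tz p z' →
        z.coeff e = z'.coeff e := by
      rintro z ⟨x, hx, rfl⟩ z' ⟨x', hx', rfl⟩ e he he'
      rcases eq_or_ne x x' with rfl | hne
      · rfl
      rcases hc hx hx' (fun h => hne h) with h | h
      · rcases h with h | ⟨h1, h2⟩
        · rw [h]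
        · have := h1 e he
          rw [HahnSeries.coeff_sub] at this
          linear_combination -this
      · rcases h with h | ⟨h1, h2⟩
        · rw [h]
        · have := h1 e he'
          rw [HahnSeries.coeff_sub] at this
          linear_combination this
    obtain ⟨y, hy⟩ := exists_limit C (fun z => tz p z) hagree
    have hywge : ∀ x ∈ c, Wge (y - (x : T).1) (tz p (x : T).1) := by
      intro x hx e he
      rw [HahnSeries.coeff_sub, hy x.1 ⟨x, hx, rfl⟩ e he, sub_self]
    -- y improves on every element of the chain
    have hgt : ∀ x ∈ c, Wgt (p.eval y) (w (p.eval (x : T).1)) := by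
      intro x hx
      obtain ⟨x', hx', hs1, hs2⟩ := hsucc x hx
      have hx'nr : p.eval x'.1 ≠ 0 := hGoodnr x'.1 x'.2
      rw [eval_expand p x'.1 y]
      apply Wgt.add
      · exact (wgt_iff_lt_order hx'nr).mpr hs2
      · apply wgt_sum
        intro j hj
        have hterm : Wge ((Polynomial.taylor x'.1 p).coeff j * (y - x'.1) ^ j)
            (w ((Polynomial.taylor x'.1 p).coeff j) + j * tz p x'.1) :=
          (wge_order _).mul ((hywge x' hx').pow j)
        exact hterm.wgt_of_lt (lt_of_lt_of_le hs2 (T1 hp x'.1 hj))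
    have hWgtyz₀ : Wgt (y - z₀) τ := by
      have h1 : Wge (y - x₁.1) (tz p x₁.1) := hywge x₁ hx₁
      have h2 : Wgt (y - x₁.1) τ := h1.wgt_of_lt x₁.2.2.1
      have h3 : Wgt (x₁.1 - z₀) τ := x₁.2.1
      have h4 : y - z₀ = (y - x₁.1) + (x₁.1 - z₀) := by ring
      rw [h4]; exact h2.add h3
    have hynr : p.eval y ≠ 0 := hnonroot y hWgtyz₀
    have hwlt : ∀ x ∈ c, w (p.eval (x : T).1) < w (p.eval y) :=
      fun x hx => (wgt_iff_lt_order hynr).mp (hgt x hx)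
    have hyGood : Good y := by
      refine ⟨hWgtyz₀, ?_, ?_⟩
      · have hne : x₁.1 ≠ y :=
          fun h => absurd (congrArg (fun u => w (p.eval u)) h) (ne_of_lt (hwlt x₁ hx₁))
        have hs : Wge (x₁.1 - y) (tz p x₁.1) := by
          have := (hywge x₁ hx₁).neg; rwa [neg_sub] at this
        have := tz_lb hp (hGoodnr x₁.1 x₁.2) hynr hne hs (hwlt x₁ hx₁)
        exact lt_trans x₁.2.2.1 this
      · exact le_trans x₁.2.2.2 (le_of_lt (hwlt x₁ hx₁))
    exact ⟨⟨y, hyGood⟩, fun x hx => Or.inr ⟨hywge x hx, hwlt x hx⟩⟩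
  obtain ⟨m, hmmax⟩ := exists_maximal_of_chains_bounded hchain (fun {a b c} => htrans a b c)
  obtain ⟨h, hh0, hhord, hhwgt⟩ := newton_step hp m.1 (hGoodnr m.1 m.2)
  have hm'sub : (m.1 + h) - m.1 = h := add_sub_cancel_left m.1 h
  have hwgeh : Wge ((m.1 + h) - m.1) (tz p m.1) := by
    rw [hm'sub, wge_iff_le_order hh0, hhord]
  have hWgtm'z₀ : Wgt ((m.1 + h) - z₀) τ := by
    have h1 : Wgt h τ := (wgt_iff_lt_order hh0).mpr (by rw [hhord]; exact m.2.2.1)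
    have h2 : (m.1 + h) - z₀ = h + (m.1 - z₀) := by ring
    rw [h2]; exact h1.add m.2.1
  have hm'nr : p.eval (m.1 + h) ≠ 0 := hnonroot _ hWgtm'z₀
  have hwlt' : w (p.eval m.1) < w (p.eval (m.1 + h)) := (wgt_iff_lt_order hm'nr).mp hhwgt
  have hm'Good : Good (m.1 + h) := by
    refine ⟨hWgtm'z₀, ?_, le_trans m.2.2.2 (le_of_lt hwlt')⟩
    have hne : m.1 ≠ m.1 + h := by
      intro hcon
      exact hh0 (by rw [← hm'sub, ← hcon, sub_self])
    have hs : Wge (m.1 - (m.1 + h)) (tz p m.1) := by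
      have := hwgeh.neg; rwa [neg_sub] at this
    exact lt_trans m.2.2.1 (tz_lb hp (hGoodnr m.1 m.2) hm'nr hne hs hwlt')
  have hrel : r m ⟨m.1 + h, hm'Good⟩ := Or.inr ⟨hwgeh, hwlt'⟩
  rcases hmmax _ hrel with heq2 | ⟨_, hlt2⟩
  · have : m.1 + h = m.1 := congrArg Subtype.val heq2
    exact hh0 (by rw [← hm'sub, this, sub_self])
  · exact absurd hwlt' (lt_asymm hlt2)


end Kap

open Kap HahnSeries Polynomial in
/-- Kapranov's theorem: the image under coordinatewise valuation of the zero locus in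
`(K∖{0})ⁿ` of a polynomial `g = Σ_{α∈A} a_α X^α` with nonzero coefficients equals the corner
locus of the tropical polynomial `x ↦ max_{α∈A} (val(a_α) + ⟨α,x⟩)`. -/
theorem kapranov (n : ℕ) (hn : 1 ≤ n) (A : Finset (Fin n → ℕ)) (hA : A.Nonempty)
    (a : (Fin n → ℕ) → K) (ha : ∀ α ∈ A, a α ≠ 0) :
    {x : Fin n → ℝ | ∃ z : Fin n → K, (∀ i, z i ≠ 0) ∧
        (∑ α ∈ A, a α * ∏ i, (z i) ^ (α i)) = 0 ∧ ∀ i, x i = Kval (z i)}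
      = {x : Fin n → ℝ | ∃ α ∈ A, ∃ β ∈ A, α ≠ β ∧
          Kval (a α) + ∑ i, (α i : ℝ) * x i = Kval (a β) + ∑ i, (β i : ℝ) * x i ∧
          ∀ γ ∈ A, Kval (a γ) + ∑ i, (γ i : ℝ) * x i ≤
            Kval (a α) + ∑ i, (α i : ℝ) * x i} := by
  classical
  ext x
  simp only [Set.mem_setOf_eq]
  set φ : (Fin n → ℕ) → ℝ := fun γ => Kval (a γ) + ∑ i, (γ i : ℝ) * x i with hφ
  constructor
  · -- easy direction
    rintro ⟨z, hz, hsum, hxv⟩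
    have hordz : ∀ i, (z i).order = -x i := by
      intro i
      have := hxv i
      rw [Kval] at this
      linarith
    have horda : ∀ γ ∈ A, (a γ).order = -Kval (a γ) := by
      intro γ _
      rw [Kval]; ring
    -- per-term facts
    have hTwge : ∀ γ ∈ A, Wge (a γ * ∏ i, z i ^ γ i) (-(φ γ)) := by
      intro γ hγ
      have h1 : Wge (a γ * ∏ i, z i ^ γ i) ((a γ).order + ∑ i, (γ i : ℝ) * (z i).order) :=
        (wge_order (a γ)).mul (wge_prod fun i _ => (wge_order (z i)).pow (γ i))
      have h2 : (a γ).order + (∑ i, (γ i : ℝ) * (z i).order) = -(φ γ) := by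
        rw [horda γ hγ, hφ]
        simp only
        rw [neg_add]
        congr 1
        rw [← Finset.sum_neg_distrib]
        apply Finset.sum_congr rfl
        intro i _
        rw [hordz i]; ring
      rwa [h2] at h1
    have hTcoeff : ∀ γ ∈ A, (a γ * ∏ i, z i ^ γ i).coeff (-(φ γ)) ≠ 0 := by
      intro γ hγ
      have h2 : -(φ γ) = (a γ).order + ∑ i, (γ i : ℝ) * (z i).order := by
        rw [horda γ hγ, hφ]
        simp only
        rw [neg_add]
        congr 1
        rw [← Finset.sum_neg_distrib]
        apply Finset.sum_congr rfl
        intro i _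
        rw [hordz i]; ring
      rw [h2, coeff_mul_of_wge (wge_order (a γ))
          (wge_prod fun i _ => (wge_order (z i)).pow (γ i)),
        coeff_prod_of_wge fun i _ => (wge_order (z i)).pow (γ i)]
      apply mul_ne_zero ((HahnSeries.coeff_order_eq_zero.not.2 (ha γ hγ)))
      rw [Finset.prod_ne_zero_iff]
      intro i _
      rw [coeff_pow_of_wge (wge_order (z i))]
      exact pow_ne_zero _ ((HahnSeries.coeff_order_eq_zero.not.2 (hz i)))
    obtain ⟨α₀, hα₀A, hα₀max⟩ := Finset.exists_max_image A φ hA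
    have hexβ : ∃ β ∈ A, β ≠ α₀ ∧ φ β = φ α₀ := by
      by_contra hcon
      push_neg at hcon
      have hcoeff0 : (∑ γ ∈ A, a γ * ∏ i, z i ^ γ i).coeff (-(φ α₀)) = 0 := by
        rw [hsum]; rfl
      rw [coeff_sum, Finset.sum_eq_single_of_mem α₀ hα₀A] at hcoeff0
      · exact hTcoeff α₀ hα₀A hcoeff0
      · intro γ hγ hγne
        have hlt : φ γ < φ α₀ :=
          lt_of_le_of_ne (hα₀max γ hγ) (fun h => (hcon γ hγ hγne) h)
        exact hTwge γ hγ _ (by linarith)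
    obtain ⟨β, hβA, hβne, hβeq⟩ := hexβ
    exact ⟨α₀, hα₀A, β, hβA, fun h => hβne h.symm, hβeq.symm, hα₀max⟩
  · -- hard direction
    rintro ⟨α, hαA, β, hβA, hne, hφeq, hmax⟩
    obtain ⟨i₀, hi₀⟩ := Function.ne_iff.mp hne
    set M := φ α with hM
    set τ : ℝ := -x i₀ with hτ
    set serase : Finset (Fin n) := Finset.univ.erase i₀ with hserase
    set B : ℕ → Finset (Fin n → ℕ) :=
      fun m => A.filter (fun γ => γ i₀ = m ∧ φ γ = M) with hB
    have hαB : α ∈ B (α i₀) := Finset.mem_filter.mpr ⟨hαA, rfl, rfl⟩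
    have hβB : β ∈ B (β i₀) := Finset.mem_filter.mpr ⟨hβA, rfl, hφeq.symm⟩
    set u : (Fin n → ℕ) → ℂ := fun γ => (a γ).coeff ((a γ).order) with hu
    have hinj : ∀ m, ∀ γ ∈ B m, ∀ γ' ∈ B m, (∀ i ∈ serase, γ i = γ' i) → γ = γ' := by
      intro m γ hγ γ' hγ' hag
      funext i
      by_cases hii : i = i₀
      · subst hii
        rw [(Finset.mem_filter.mp hγ).2.1, (Finset.mem_filter.mp hγ').2.1]
      · exact hag i (Finset.mem_erase.mpr ⟨hii, Finset.mem_univ i⟩)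
    have huz : ∀ m, ∀ γ ∈ B m, u γ ≠ 0 := by
      intro m γ hγ
      exact (HahnSeries.coeff_order_eq_zero.not.2 (ha γ (Finset.mem_filter.mp hγ).1))
    obtain ⟨c, hc0, hSk, hSl⟩ := exists_generic serase (B (α i₀)) (B (β i₀))
      ⟨α, hαB⟩ ⟨β, hβB⟩ u (huz _) (huz _) (hinj _) (hinj _)
    -- the substituted series for i ≠ i₀
    set zc : Fin n → K := fun i => HahnSeries.single (-x i) (c i) with hzc
    have hzc0 : ∀ i, zc i ≠ 0 := fun i => HahnSeries.single_ne_zero (hc0 i)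
    have hzcord : ∀ i, (zc i).order = -x i := fun i => HahnSeries.order_single (hc0 i)
    -- the collapsed one-variable polynomial
    set b : ℕ → K := fun m => ∑ γ ∈ A.filter (fun γ => γ i₀ = m),
      a γ * ∏ i ∈ serase, zc i ^ γ i with hb
    set P : Polynomial K := ∑ m ∈ A.image (fun γ => γ i₀), Polynomial.C (b m)
      * Polynomial.X ^ m with hP
    have hPcoeff : ∀ m : ℕ, P.coeff m = if m ∈ A.image (fun γ => γ i₀) then b m else 0 :=
      fun m => coeff_sum_CXpow _ _ m
    -- per-term analysis of b m
    have hvψ : ∀ γ ∈ A, ∀ m : ℕ, γ i₀ = m →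
        (a γ).order + (∑ i ∈ serase, (γ i : ℝ) * (-x i)) = -(φ γ) - m * τ := by
      intro γ hγ m hm
      subst hm
      have h1 : (a γ).order = -Kval (a γ) := by rw [Kval]; ring
      have h2 : (∑ i, (γ i : ℝ) * x i)
          = (γ i₀ : ℝ) * x i₀ + ∑ i ∈ serase, (γ i : ℝ) * x i := by
        rw [hserase]
        exact (Finset.add_sum_erase Finset.univ (fun i => (γ i : ℝ) * x i)
          (Finset.mem_univ i₀)).symm
      have h3 : (∑ i ∈ serase, (γ i : ℝ) * (-x i))
          = -∑ i ∈ serase, (γ i : ℝ) * x i := by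
        rw [← Finset.sum_neg_distrib]
        apply Finset.sum_congr rfl
        intro i _
        ring
      have h4 : φ γ = Kval (a γ) + ∑ i, (γ i : ℝ) * x i := rfl
      rw [h1, h3, h4, h2, hτ]
      ring
    have hUwge : ∀ γ ∈ A, Wge (a γ * ∏ i ∈ serase, zc i ^ γ i)
        ((a γ).order + ∑ i ∈ serase, (γ i : ℝ) * (-x i)) := by
      intro γ hγ
      apply (wge_order (a γ)).mul
      apply wge_prod
      intro i _
      have := (wge_order (zc i)).pow (γ i)
      rwa [hzcord i] at this
    have hUcoeff : ∀ γ ∈ A, (a γ * ∏ i ∈ serase, zc i ^ γ i).coeff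
        ((a γ).order + ∑ i ∈ serase, (γ i : ℝ) * (-x i))
          = u γ * ∏ i ∈ serase, (c i) ^ γ i := by
      intro γ hγ
      have hzwge : ∀ i ∈ serase, Wge (zc i ^ γ i) ((γ i : ℝ) * (-x i)) := by
        intro i _
        have := (wge_order (zc i)).pow (γ i)
        rwa [hzcord i] at this
      rw [coeff_mul_of_wge (wge_order (a γ)) (wge_prod hzwge), coeff_prod_of_wge hzwge]
      congr 1
      apply Finset.prod_congr rfl
      intro i _
      have h3 := coeff_pow_of_wge (a := zc i) (u := -x i)
        (by rw [← hzcord i]; exact wge_order _) (γ i)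
      rw [h3]
      congr 1
      rw [hzc]
      exact HahnSeries.coeff_single_same _ _
    -- order facts about b m
    have hbwge : ∀ m : ℕ, Wge (b m) (-M - m * τ) := by
      intro m
      apply wge_sum
      intro γ hγ
      obtain ⟨hγA, hγm⟩ := Finset.mem_filter.mp hγ
      apply wge_of_le (hUwge γ hγA)
      rw [hvψ γ hγA m hγm]
      have := hmax γ hγA
      have hMle : φ γ ≤ M := this
      linarith
    have hbcoeff : ∀ m : ℕ, (b m).coeff (-M - m * τ)
        = ∑ γ ∈ B m, u γ * ∏ i ∈ serase, (c i) ^ γ i := by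
      intro m
      rw [hb]
      simp only
      rw [coeff_sum]
      have hsub : B m ⊆ A.filter (fun γ => γ i₀ = m) := by
        intro γ hγ
        obtain ⟨h1, h2, _⟩ := Finset.mem_filter.mp hγ
        exact Finset.mem_filter.mpr ⟨h1, h2⟩
      rw [← Finset.sum_subset hsub]
      · apply Finset.sum_congr rfl
        intro γ hγ
        obtain ⟨hγA, hγm, hγM⟩ := Finset.mem_filter.mp hγ
        have h5 := hUcoeff γ hγA
        have h6 := hvψ γ hγA m hγm
        rw [hγM] at h6
        rw [h6] at h5
        exact h5
      · intro γ hγ hγB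
        obtain ⟨hγA, hγm⟩ := Finset.mem_filter.mp hγ
        have hγM : φ γ ≠ M := by
          intro h
          exact hγB (Finset.mem_filter.mpr ⟨hγA, hγm, h⟩)
        have hlt : φ γ < M := lt_of_le_of_ne (hmax γ hγA) hγM
        apply hUwge γ hγA
        rw [hvψ γ hγA m hγm]
        linarith
    have hbgood : ∀ m : ℕ, m ∈ A.image (fun γ => γ i₀) →
        (∑ γ ∈ B m, u γ * ∏ i ∈ serase, (c i) ^ γ i) ≠ 0 →
        (b m ≠ 0 ∧ (b m).order = -M - m * τ ∧ P.coeff m = b m) := by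
      intro m hmem hS
      have hcoeffne : (b m).coeff (-M - m * τ) ≠ 0 := by rw [hbcoeff m]; exact hS
      have hbne : b m ≠ 0 := HahnSeries.ne_zero_of_coeff_ne_zero hcoeffne
      refine ⟨hbne, le_antisymm (HahnSeries.order_le_of_coeff_ne_zero hcoeffne)
        ((wge_iff_le_order hbne).mp (hbwge m)), ?_⟩
      rw [hPcoeff m, if_pos hmem]
    have hmemk : (α i₀) ∈ A.image (fun γ => γ i₀) := Finset.mem_image_of_mem _ hαA
    have hmeml : (β i₀) ∈ A.image (fun γ => γ i₀) := Finset.mem_image_of_mem _ hβA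
    obtain ⟨hbk0, hbkord, hPk⟩ := hbgood (α i₀) hmemk hSk
    obtain ⟨hbl0, hblord, hPl⟩ := hbgood (β i₀) hmeml hSl
    have hPk0 : P.coeff (α i₀) ≠ 0 := by rw [hPk]; exact hbk0
    have hPl0 : P.coeff (β i₀) ≠ 0 := by rw [hPl]; exact hbl0
    have hwP : ∀ m : ℕ, ∀ bm0 : b m ≠ 0, (b m).order = -M - m * τ → P.coeff m = b m →
        w (P.coeff m) + m * τ = -M := by
      intro m hbm0 hord hcoeff
      rw [hcoeff]
      show (b m).order + m * τ = -M
      rw [hord]; ring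
    have hwk := hwP (α i₀) hbk0 hbkord hPk
    have hwl := hwP (β i₀) hbl0 hblord hPl
    have heqP : w (P.coeff (α i₀)) + (α i₀) * τ = w (P.coeff (β i₀)) + (β i₀) * τ := by
      rw [hwk, hwl]
    have hminP : ∀ j, P.coeff j ≠ 0 →
        w (P.coeff (α i₀)) + (α i₀) * τ ≤ w (P.coeff j) + j * τ := by
      intro j hj
      rw [hwk]
      have hjmem : j ∈ A.image (fun γ => γ i₀) := by
        by_contra hcon
        rw [hPcoeff j, if_neg hcon] at hj
        exact hj rfl
      have hPj : P.coeff j = b j := by rw [hPcoeff j, if_pos hjmem]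
      have hbj0 : b j ≠ 0 := by rw [← hPj]; exact hj
      have hord : -M - j * τ ≤ (b j).order := (wge_iff_le_order hbj0).mp (hbwge j)
      rw [hPj]
      show -M ≤ (b j).order + j * τ
      linarith
    -- apply the one-variable theorem
    have hex : ∃ r : K, r ≠ 0 ∧ r.order = τ ∧ P.eval r = 0 := by
      rcases lt_or_gt_of_ne hi₀ with hkl | hkl
      · exact onevar hkl hPk0 hPl0 heqP hminP
      · refine onevar hkl hPl0 hPk0 heqP.symm ?_
        intro j hj
        rw [← heqP]
        exact hminP j hj
    obtain ⟨r, hr0, hrord, hPr⟩ := hex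
    -- assemble the point z
    set z : Fin n → K := Function.update zc i₀ r with hzdef
    have hzi₀ : z i₀ = r := Function.update_self i₀ r zc
    have hzi : ∀ i, i ≠ i₀ → z i = zc i := fun i hi => Function.update_of_ne hi r zc
    refine ⟨z, ?_, ?_, ?_⟩
    · intro i
      by_cases hi : i = i₀
      · rw [hi, hzi₀]; exact hr0
      · rw [hzi i hi]; exact hzc0 i
    · -- the evaluation identity
      have hprod : ∀ γ ∈ A, (∏ i, z i ^ γ i)
          = r ^ (γ i₀) * ∏ i ∈ serase, zc i ^ γ i := by
        intro γ hγ
        rw [hserase, ← Finset.mul_prod_erase Finset.univ (fun i => z i ^ γ i)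
          (Finset.mem_univ i₀), hzi₀]
        congr 1
        apply Finset.prod_congr rfl
        intro i hi
        rw [hzi i (Finset.mem_erase.mp hi).1]
      have step1 : ∑ γ ∈ A, a γ * ∏ i, z i ^ γ i
          = ∑ γ ∈ A, (a γ * ∏ i ∈ serase, zc i ^ γ i) * r ^ (γ i₀) := by
        apply Finset.sum_congr rfl
        intro γ hγ
        rw [hprod γ hγ]
        ring
      have step2 : ∑ γ ∈ A, (a γ * ∏ i ∈ serase, zc i ^ γ i) * r ^ (γ i₀)
          = ∑ m ∈ A.image (fun γ => γ i₀), ∑ γ ∈ A.filter (fun γ => γ i₀ = m),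
            (a γ * ∏ i ∈ serase, zc i ^ γ i) * r ^ (γ i₀) := by
        exact (Finset.sum_fiberwise_of_maps_to
          (fun γ hγ => Finset.mem_image_of_mem (fun γ => γ i₀) hγ) _).symm
      have step3 : ∀ m ∈ A.image (fun γ => γ i₀),
          (∑ γ ∈ A.filter (fun γ => γ i₀ = m),
            (a γ * ∏ i ∈ serase, zc i ^ γ i) * r ^ (γ i₀)) = b m * r ^ m := by
        intro m _
        rw [hb]
        simp only
        rw [Finset.sum_mul]
        apply Finset.sum_congr rfl
        intro γ hγ
        rw [(Finset.mem_filter.mp hγ).2]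
      have step4 : P.eval r = ∑ m ∈ A.image (fun γ => γ i₀), b m * r ^ m := by
        rw [hP, Polynomial.eval_finset_sum]
        apply Finset.sum_congr rfl
        intro m _
        rw [Polynomial.eval_mul, Polynomial.eval_C, Polynomial.eval_pow, Polynomial.eval_X]
      rw [step1, step2, Finset.sum_congr rfl step3, ← step4, hPr]
    · intro i
      by_cases hi : i = i₀
      · subst hi
        rw [hzi₀, Kval, hrord, hτ]; ring
      · rw [hzi i hi, Kval, hzcord i]; ring
end

section
/- One has the equality of subsets of ℝ²: {(arg z, arg w) : z, w ∈ ℂ∖{0}, 1 + z + w = 0, 0 < arg z < π} = {(α,β) ∈ ℝ² : 0 < α < π and −π < β < α − π}. -/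
open Complex Real

/-- The part of the coamoeba of the line `1 + z + w = 0` lying over `0 < arg z < π`
is exactly the open triangle `{(α,β) : 0 < α < π, -π < β < α - π}`. -/
theorem coamoeba_line_triangle :
    {p : ℝ × ℝ | ∃ z w : ℂ, z ≠ 0 ∧ w ≠ 0 ∧ 1 + z + w = 0 ∧
        p.1 = Complex.arg z ∧ p.2 = Complex.arg w ∧
        0 < Complex.arg z ∧ Complex.arg z < Real.pi}
      = {p : ℝ × ℝ | 0 < p.1 ∧ p.1 < Real.pi ∧ -Real.pi < p.2 ∧ p.2 < p.1 - Real.pi} := by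
  ext p
  constructor
  · rintro ⟨z, w, hz, hw, hzw, hp1, hp2, h0, hπ⟩
    -- z has positive imaginary part
    have habs : 0 < ‖z‖ := norm_pos_iff.mpr hz
    have him : 0 < z.im := by
      have hs : 0 < Real.sin (Complex.arg z) := Real.sin_pos_of_pos_of_lt_pi h0 hπ
      rw [Complex.sin_arg] at hs
      exact (div_pos_iff.1 hs).resolve_right (fun h => absurd h.2 (not_lt.mpr habs.le)) |>.1
    set u : ℂ := 1 + z with hu
    have huim : u.im = z.im := by simp [hu]
    have hupos : 0 < u.im := huim ▸ him
    have hune : u ≠ 0 := fun h => by simp [h] at hupos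
    have habsu : 0 < ‖u‖ := norm_pos_iff.mpr hune
    have hwu : w = -u := by rw [hu]; linear_combination hzw
    -- arg u ∈ (0, π)
    have hu0 : 0 < Complex.arg u := by
      rcases lt_or_eq_of_le (Complex.arg_nonneg_iff.2 hupos.le) with h | h
      · exact h
      · exact absurd ((Complex.arg_eq_zero_iff).1 h.symm).2 hupos.ne'
    -- arg u < arg z
    have hkey : Complex.arg u < Complex.arg z := by
      by_contra hle
      push_neg at hle
      have hd1 : Complex.arg z - Complex.arg u ≤ 0 := by linarith
      have hd2 : -Real.pi ≤ Complex.arg z - Complex.arg u := by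
        have := Complex.arg_le_pi u
        linarith
      have hsin : Real.sin (Complex.arg z - Complex.arg u) ≤ 0 :=
        Real.sin_nonpos_of_nonpos_of_neg_pi_le hd1 hd2
      rw [Real.sin_sub, Complex.sin_arg, Complex.cos_arg hz, Complex.sin_arg,
        Complex.cos_arg hune] at hsin
      have hure : u.re = 1 + z.re := by simp [hu]
      rw [hure, huim] at hsin
      have : z.im / ‖z‖ * ((1 + z.re) / ‖u‖) -
          z.re / ‖z‖ * (z.im / ‖u‖)
          = z.im / (‖z‖ * ‖u‖) := by field_simp; ring
      rw [this] at hsin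
      have : 0 < z.im / (‖z‖ * ‖u‖) := by positivity
      linarith
    have hargw : Complex.arg w = Complex.arg u - Real.pi := by
      rw [hwu]; exact Complex.arg_neg_eq_arg_sub_pi_of_im_pos hupos
    refine ⟨hp1 ▸ h0, hp1 ▸ hπ, ?_, ?_⟩
    · rw [hp2, hargw]; linarith
    · rw [hp1, hp2, hargw]; linarith
  · rintro ⟨h1, h2, h3, h4⟩
    obtain ⟨α, β⟩ := p
    simp only at h1 h2 h3 h4 ⊢
    set γ : ℝ := β + Real.pi with hγ
    have hγ0 : 0 < γ := by simp [hγ]; linarith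
    have hγα : γ < α := by simp [hγ]; linarith
    have hsγ : 0 < Real.sin γ := Real.sin_pos_of_pos_of_lt_pi hγ0 (by linarith)
    have hsαγ : 0 < Real.sin (α - γ) :=
      Real.sin_pos_of_pos_of_lt_pi (by linarith) (by linarith)
    have hsα : 0 < Real.sin α := Real.sin_pos_of_pos_of_lt_pi h1 h2
    set r : ℝ := Real.sin γ / Real.sin (α - γ) with hr
    set s : ℝ := Real.sin α / Real.sin (α - γ) with hs
    have hrpos : 0 < r := div_pos hsγ hsαγ
    have hspos : 0 < s := div_pos hsα hsαγ
    have hcosβ : Real.cos β = -Real.cos γ := by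
      have : β = γ - Real.pi := by simp [hγ]
      rw [this, Real.cos_sub_pi]
    have hsinβ : Real.sin β = -Real.sin γ := by
      have : β = γ - Real.pi := by simp [hγ]
      rw [this, Real.sin_sub_pi]
    refine ⟨(r : ℂ) * (Complex.cos α + Complex.sin α * Complex.I),
            (s : ℂ) * (Complex.cos β + Complex.sin β * Complex.I), ?_, ?_, ?_, ?_, ?_, ?_, ?_⟩
    · apply mul_ne_zero (by exact_mod_cast hrpos.ne')
      intro h
      have := Complex.norm_cos_add_sin_mul_I α
      rw [h] at this; simp at this
    · apply mul_ne_zero (by exact_mod_cast hspos.ne')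
      intro h
      have := Complex.norm_cos_add_sin_mul_I β
      rw [h] at this; simp at this
    · apply Complex.ext <;>
        simp [Complex.add_re, Complex.add_im, Complex.mul_re, Complex.mul_im,
          Complex.cos_ofReal_re, Complex.sin_ofReal_re, Complex.cos_ofReal_im,
          Complex.sin_ofReal_im, hcosβ, hsinβ]
      · -- real part: 1 + r cos α - s cos γ = 0
        have key : s * Real.cos γ - r * Real.cos α = 1 := by
          rw [hr, hs]
          field_simp
          linarith [Real.sin_sub α γ]
        linarith
      · have key : r * Real.sin α = s * Real.sin γ := by
          rw [hr, hs]; field_simp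
        linarith
    · rw [Complex.arg_real_mul _ hrpos,
        Complex.arg_cos_add_sin_mul_I ⟨by linarith, by linarith⟩]
    · rw [Complex.arg_real_mul _ hspos,
        Complex.arg_cos_add_sin_mul_I ⟨by linarith [Real.pi_pos], by linarith [Real.pi_pos]⟩]
    · rw [Complex.arg_real_mul _ hrpos,
        Complex.arg_cos_add_sin_mul_I ⟨by linarith, by linarith⟩]
      exact h1
    · rw [Complex.arg_real_mul _ hrpos,
        Complex.arg_cos_add_sin_mul_I ⟨by linarith, by linarith⟩]
      exact h2
end

section
/- Let H = {(z,w) ∈ (ℂ∖{0})² : 1 + z + w = 0}. The closure in 𝕋² of Ārg(H) equals the image under the projection ℝ² → 𝕋² of the union of the two closed triangles with vertex sets {(0,−π),(π,−π),(π,0)} and {(0,π),(−π,π),(−π,0)}. -/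
open Real Set Complex Filter Topology

instance : Fact (0 < 2 * Real.pi) := ⟨by positivity⟩

namespace CoamoebaLineAux

/-- Weak-inequality description of the first closed triangle. -/
def S1 : Set (ℝ × ℝ) := {p | p.1 ≤ π ∧ -π ≤ p.2 ∧ p.2 ≤ p.1 - π}

/-- Weak-inequality description of the second closed triangle. -/
def S2 : Set (ℝ × ℝ) := {p | -π ≤ p.1 ∧ p.2 ≤ π ∧ p.1 + π ≤ p.2}

/-- Open (strict) version of the first triangle. -/
def U1 : Set (ℝ × ℝ) := {p | p.1 < π ∧ -π < p.2 ∧ p.2 < p.1 - π}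

/-- Open (strict) version of the second triangle. -/
def U2 : Set (ℝ × ℝ) := {p | -π < p.1 ∧ p.2 < π ∧ p.1 + π < p.2}

lemma S1_subset_hull : S1 ⊆ convexHull ℝ ({(0, -π), (π, -π), (π, 0)} : Set (ℝ × ℝ)) := by
  rintro ⟨x, y⟩ ⟨h1, h2, h3⟩
  simp only [Prod.fst, Prod.snd] at h1 h2 h3
  have hπ : (0:ℝ) < π := Real.pi_pos
  have := Finset.centerMass_mem_convexHull (R := ℝ) (t := (Finset.univ : Finset (Fin 3)))
    (w := ![π - x, x - y - π, π + y])
    (z := ![((0:ℝ), -π), (π, -π), (π, 0)])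
    (s := ({(0, -π), (π, -π), (π, 0)} : Set (ℝ × ℝ)))
    (by intro i _; fin_cases i <;> simp <;> linarith)
    (by rw [Fin.sum_univ_three]; simp; linarith)
    (by intro i _; fin_cases i <;> simp)
  convert this using 1
  rw [Finset.centerMass, Fin.sum_univ_three, Fin.sum_univ_three]
  simp only [Matrix.cons_val_zero, Matrix.cons_val_one, Matrix.head_cons,
    Matrix.cons_val_two, Matrix.tail_cons, Prod.smul_mk, smul_eq_mul, Prod.mk_add_mk,
    Prod.smul_mk]
  have hs : π - x + (x - y - π) + (π + y) = π := by ring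
  rw [hs]
  ext <;> simp <;> field_simp <;> ring

lemma S2_subset_hull : S2 ⊆ convexHull ℝ ({(0, π), (-π, π), (-π, 0)} : Set (ℝ × ℝ)) := by
  rintro ⟨x, y⟩ ⟨h1, h2, h3⟩
  simp only [Prod.fst, Prod.snd] at h1 h2 h3
  have hπ : (0:ℝ) < π := Real.pi_pos
  have := Finset.centerMass_mem_convexHull (R := ℝ) (t := (Finset.univ : Finset (Fin 3)))
    (w := ![π + x, y - x - π, π - y])
    (z := ![((0:ℝ), π), (-π, π), (-π, 0)])
    (s := ({(0, π), (-π, π), (-π, 0)} : Set (ℝ × ℝ)))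
    (by intro i _; fin_cases i <;> simp <;> linarith)
    (by rw [Fin.sum_univ_three]; simp; linarith)
    (by intro i _; fin_cases i <;> simp)
  convert this using 1
  rw [Finset.centerMass, Fin.sum_univ_three, Fin.sum_univ_three]
  simp only [Matrix.cons_val_zero, Matrix.cons_val_one, Matrix.head_cons,
    Matrix.cons_val_two, Matrix.tail_cons, Prod.smul_mk, smul_eq_mul, Prod.mk_add_mk,
    Prod.smul_mk]
  have hs : π + x + (y - x - π) + (π - y) = π := by ring
  rw [hs]
  ext <;> simp <;> field_simp <;> ring

lemma convex_S1 : Convex ℝ S1 := by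
  intro p hp q hq a b ha hb hab
  obtain ⟨hp1, hp2, hp3⟩ := hp
  obtain ⟨hq1, hq2, hq3⟩ := hq
  refine ⟨?_, ?_, ?_⟩ <;>
    simp only [Prod.fst_add, Prod.snd_add, Prod.smul_fst, Prod.smul_snd, smul_eq_mul] <;>
    nlinarith [mul_le_mul_of_nonneg_left hp1 ha, mul_le_mul_of_nonneg_left hq1 hb,
      mul_le_mul_of_nonneg_left hp2 ha, mul_le_mul_of_nonneg_left hq2 hb,
      mul_le_mul_of_nonneg_left hp3 ha, mul_le_mul_of_nonneg_left hq3 hb]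

lemma convex_S2 : Convex ℝ S2 := by
  intro p hp q hq a b ha hb hab
  obtain ⟨hp1, hp2, hp3⟩ := hp
  obtain ⟨hq1, hq2, hq3⟩ := hq
  refine ⟨?_, ?_, ?_⟩ <;>
    simp only [Prod.fst_add, Prod.snd_add, Prod.smul_fst, Prod.smul_snd, smul_eq_mul] <;>
    nlinarith [mul_le_mul_of_nonneg_left hp1 ha, mul_le_mul_of_nonneg_left hq1 hb,
      mul_le_mul_of_nonneg_left hp2 ha, mul_le_mul_of_nonneg_left hq2 hb,
      mul_le_mul_of_nonneg_left hp3 ha, mul_le_mul_of_nonneg_left hq3 hb]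

lemma mem_closure_U1 {p : ℝ × ℝ} (hp : p ∈ S1) : p ∈ closure U1 := by
  obtain ⟨hp1, hp2, hp3⟩ := hp
  set c : ℝ × ℝ := (3 * π / 4, -3 * π / 4) with hc
  have hπ : (0:ℝ) < π := Real.pi_pos
  have hne : (𝓝[Set.Ico (0:ℝ) 1] 1).NeBot := by
    refine mem_closure_iff_nhdsWithin_neBot.mp ?_
    rw [closure_Ico (by norm_num : (0:ℝ) ≠ 1)]
    exact ⟨by norm_num, le_refl 1⟩
  have hcont : Continuous fun t : ℝ => (1 - t) • c + t • p := by continuity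
  have htend : Filter.Tendsto (fun t : ℝ => (1 - t) • c + t • p)
      (𝓝[Set.Ico (0:ℝ) 1] 1) (𝓝 p) := by
    have := hcont.tendsto 1
    simp only [sub_self, zero_smul, one_smul, zero_add] at this
    exact this.mono_left nhdsWithin_le_nhds
  refine mem_closure_of_tendsto htend ?_
  · filter_upwards [eventually_mem_nhdsWithin] with t ht
    obtain ⟨ht0, ht1⟩ := ht
    have h1t : 0 < 1 - t := by linarith
    refine ⟨?_, ?_, ?_⟩ <;>
      simp only [Prod.fst_add, Prod.snd_add, Prod.smul_fst, Prod.smul_snd, smul_eq_mul, hc] <;>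
      nlinarith [mul_le_mul_of_nonneg_left hp1 ht0, mul_le_mul_of_nonneg_left hp2 ht0,
        mul_le_mul_of_nonneg_left hp3 ht0]

lemma mem_closure_U2 {p : ℝ × ℝ} (hp : p ∈ S2) : p ∈ closure U2 := by
  obtain ⟨hp1, hp2, hp3⟩ := hp
  set c : ℝ × ℝ := (-3 * π / 4, 3 * π / 4) with hc
  have hπ : (0:ℝ) < π := Real.pi_pos
  have hne : (𝓝[Set.Ico (0:ℝ) 1] 1).NeBot := by
    refine mem_closure_iff_nhdsWithin_neBot.mp ?_
    rw [closure_Ico (by norm_num : (0:ℝ) ≠ 1)]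
    exact ⟨by norm_num, le_refl 1⟩
  have hcont : Continuous fun t : ℝ => (1 - t) • c + t • p := by continuity
  have htend : Filter.Tendsto (fun t : ℝ => (1 - t) • c + t • p)
      (𝓝[Set.Ico (0:ℝ) 1] 1) (𝓝 p) := by
    have := hcont.tendsto 1
    simp only [sub_self, zero_smul, one_smul, zero_add] at this
    exact this.mono_left nhdsWithin_le_nhds
  refine mem_closure_of_tendsto htend ?_
  · filter_upwards [eventually_mem_nhdsWithin] with t ht
    obtain ⟨ht0, ht1⟩ := ht
    have h1t : 0 < 1 - t := by linarith
    refine ⟨?_, ?_, ?_⟩ <;>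
      simp only [Prod.fst_add, Prod.snd_add, Prod.smul_fst, Prod.smul_snd, smul_eq_mul, hc] <;>
      nlinarith [mul_le_mul_of_nonneg_left hp1 ht0, mul_le_mul_of_nonneg_left hp2 ht0,
        mul_le_mul_of_nonneg_left hp3 ht0]

lemma hull1_subset_closure :
    convexHull ℝ ({(0, -π), (π, -π), (π, 0)} : Set (ℝ × ℝ)) ⊆ closure U1 := by
  have h := convexHull_min (show ({(0, -π), (π, -π), (π, 0)} : Set (ℝ × ℝ)) ⊆ S1 by
    rintro p (rfl | rfl | rfl) <;>
      exact ⟨by simp [Real.pi_pos.le]; try linarith [Real.pi_pos],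
             by simp; try linarith [Real.pi_pos],
             by simp; try linarith [Real.pi_pos]⟩) convex_S1
  exact fun p hp => mem_closure_U1 (h hp)

lemma hull2_subset_closure :
    convexHull ℝ ({(0, π), (-π, π), (-π, 0)} : Set (ℝ × ℝ)) ⊆ closure U2 := by
  have h := convexHull_min (show ({(0, π), (-π, π), (-π, 0)} : Set (ℝ × ℝ)) ⊆ S2 by
    rintro p (rfl | rfl | rfl) <;>
      exact ⟨by simp [Real.pi_pos.le]; try linarith [Real.pi_pos],
             by simp; try linarith [Real.pi_pos],
             by simp; try linarith [Real.pi_pos]⟩) convex_S2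
  exact fun p hp => mem_closure_U2 (h hp)

lemma exists_line_point {α β : ℝ} (hα : α ∈ Set.Ioc (-π) π) (hβ : β ∈ Set.Ioc (-π) π)
    (hr : 0 < -Real.sin β / Real.sin (β - α)) (hs : 0 < Real.sin α / Real.sin (β - α)) :
    ∃ z w : ℂ, z ≠ 0 ∧ w ≠ 0 ∧ 1 + z + w = 0 ∧ Complex.arg z = α ∧ Complex.arg w = β := by
  set D := Real.sin (β - α) with hD
  have hDne : D ≠ 0 := by
    intro h
    rw [h] at hr
    simp at hr
  set r : ℝ := -Real.sin β / D with hrdef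
  set s : ℝ := Real.sin α / D with hsdef
  refine ⟨(r : ℂ) * (Complex.cos α + Complex.sin α * Complex.I),
          (s : ℂ) * (Complex.cos β + Complex.sin β * Complex.I), ?_, ?_, ?_, ?_, ?_⟩
  · apply mul_ne_zero
    · exact_mod_cast ne_of_gt hr
    · intro h
      have := Complex.norm_cos_add_sin_mul_I α
      rw [h] at this
      simp at this
  · apply mul_ne_zero
    · exact_mod_cast ne_of_gt hs
    · intro h
      have := Complex.norm_cos_add_sin_mul_I β
      rw [h] at this
      simp at this
  · have hsub : D = Real.sin β * Real.cos α - Real.cos β * Real.sin α := Real.sin_sub β α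
    apply Complex.ext <;>
      simp only [← Complex.ofReal_cos, ← Complex.ofReal_sin, Complex.add_re, Complex.add_im,
        Complex.one_re, Complex.one_im, Complex.mul_re, Complex.mul_im, Complex.ofReal_re,
        Complex.ofReal_im, Complex.I_re, Complex.I_im, Complex.zero_re, Complex.zero_im]
    · rw [hrdef, hsdef]
      field_simp
      nlinarith [hsub]
    · rw [hrdef, hsdef]
      field_simp
      ring
  · exact Complex.arg_mul_cos_add_sin_mul_I hr hα
  · exact Complex.arg_mul_cos_add_sin_mul_I hs hβ

lemma U1_spec {α β : ℝ} (h : (α, β) ∈ U1) :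
    ∃ z w : ℂ, z ≠ 0 ∧ w ≠ 0 ∧ 1 + z + w = 0 ∧ Complex.arg z = α ∧ Complex.arg w = β := by
  obtain ⟨h1, h2, h3⟩ := h
  simp only [Prod.fst, Prod.snd] at h1 h2 h3
  have hπ : (0:ℝ) < π := Real.pi_pos
  have hα0 : 0 < α := by linarith
  have hβ0 : β < 0 := by linarith
  have hsinα : 0 < Real.sin α := Real.sin_pos_of_pos_of_lt_pi hα0 h1
  have hsinβ : Real.sin β < 0 := by
    have h4 : 0 < Real.sin (-β) := Real.sin_pos_of_pos_of_lt_pi (by linarith) (by linarith)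
    rw [Real.sin_neg] at h4
    linarith
  have hD : 0 < Real.sin (β - α) := by
    have h5 : Real.sin ((β - α) + 2 * π) = Real.sin (β - α) := Real.sin_add_two_pi _
    have h6 : 0 < Real.sin ((β - α) + 2 * π) :=
      Real.sin_pos_of_pos_of_lt_pi (by linarith) (by linarith)
    linarith
  exact exists_line_point ⟨by linarith, h1.le⟩ ⟨h2, by linarith⟩
    (div_pos (by linarith) hD) (div_pos hsinα hD)

lemma U2_spec {α β : ℝ} (h : (α, β) ∈ U2) :
    ∃ z w : ℂ, z ≠ 0 ∧ w ≠ 0 ∧ 1 + z + w = 0 ∧ Complex.arg z = α ∧ Complex.arg w = β := by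
  obtain ⟨h1, h2, h3⟩ := h
  simp only [Prod.fst, Prod.snd] at h1 h2 h3
  have hπ : (0:ℝ) < π := Real.pi_pos
  have hα0 : α < 0 := by linarith
  have hβ0 : 0 < β := by linarith
  have hsinβ : 0 < Real.sin β := Real.sin_pos_of_pos_of_lt_pi hβ0 h2
  have hsinα : Real.sin α < 0 := by
    have h4 : 0 < Real.sin (-α) := Real.sin_pos_of_pos_of_lt_pi (by linarith) (by linarith)
    rw [Real.sin_neg] at h4
    linarith
  have hD : Real.sin (β - α) < 0 := by
    have h5 : Real.sin ((β - α) - π) = -Real.sin (β - α) := Real.sin_sub_pi _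
    have h6 : 0 < Real.sin ((β - α) - π) :=
      Real.sin_pos_of_pos_of_lt_pi (by linarith) (by linarith)
    linarith
  exact exists_line_point ⟨h1, by linarith⟩ ⟨by linarith, h2.le⟩
    (div_pos_of_neg_of_neg (by linarith) hD) (div_pos_of_neg_of_neg hsinα hD)

lemma coe_neg_pi : ((-π : ℝ) : AddCircle (2*π)) = ((π : ℝ) : AddCircle (2*π)) := by
  have h := AddCircle.coe_add_period (2*π) (-π)
  rw [show (-π + 2*π : ℝ) = π by ring] at h
  exact h.symm

lemma bounds_of_sin_pos {α : ℝ} (h1 : -π < α) (h2 : α ≤ π) (h : 0 < Real.sin α) :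
    0 < α ∧ α < π := by
  constructor
  · by_contra hc
    push_neg at hc
    linarith [Real.sin_nonpos_of_nonpos_of_neg_pi_le hc h1.le]
  · rcases eq_or_lt_of_le h2 with rfl | hlt
    · simp at h
    · exact hlt

lemma bounds_of_sin_neg {α : ℝ} (h1 : -π < α) (h2 : α ≤ π) (h : Real.sin α < 0) :
    -π < α ∧ α < 0 := by
  refine ⟨h1, ?_⟩
  by_contra hc
  push_neg at hc
  linarith [Real.sin_nonneg_of_nonneg_of_le_pi hc h2]

lemma argH_cases {z w : ℂ} (hz : z ≠ 0) (hw : w ≠ 0) (h : 1 + z + w = 0) :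
    ∃ q : ℝ × ℝ, (q ∈ S1 ∪ S2) ∧
      ((q.1 : ℝ) : AddCircle (2*π)) = ((Complex.arg z : ℝ) : AddCircle (2*π)) ∧
      ((q.2 : ℝ) : AddCircle (2*π)) = ((Complex.arg w : ℝ) : AddCircle (2*π)) := by
  set r : ℝ := ‖z‖ with hrd
  set s : ℝ := ‖w‖ with hsd
  set α : ℝ := Complex.arg z with hαd
  set β : ℝ := Complex.arg w with hβd
  have hr : 0 < r := norm_pos_iff.mpr hz
  have hs : 0 < s := norm_pos_iff.mpr hw
  have hα1 : -π < α := Complex.neg_pi_lt_arg z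
  have hα2 : α ≤ π := Complex.arg_le_pi z
  have hβ1 : -π < β := Complex.neg_pi_lt_arg w
  have hβ2 : β ≤ π := Complex.arg_le_pi w
  have hzre : z.re = r * Real.cos α := by
    rw [hαd, Complex.cos_arg hz]; field_simp; rfl
  have hzim : z.im = r * Real.sin α := by
    rw [hαd, Complex.sin_arg]; field_simp; rfl
  have hwre : w.re = s * Real.cos β := by
    rw [hβd, Complex.cos_arg hw]; field_simp; rfl
  have hwim : w.im = s * Real.sin β := by
    rw [hβd, Complex.sin_arg]; field_simp; rfl
  have heq_re : 1 + z.re + w.re = 0 := by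
    have := congrArg Complex.re h; simpa using this
  have heq_im : z.im + w.im = 0 := by
    have := congrArg Complex.im h; simpa using this
  have key : r * s * Real.sin (β - α) = z.im := by
    have e1 : r * s * Real.sin (β - α) = w.im * z.re - w.re * z.im := by
      rw [Real.sin_sub, hzre, hzim, hwre, hwim]; ring
    rw [e1]
    linear_combination z.re * heq_im - z.im * heq_re
  rcases lt_trichotomy z.im 0 with hneg | h0 | hpos
  · -- z.im < 0 : q = (α, β) ∈ S2
    have hsinα : Real.sin α < 0 := by nlinarith [hzim]
    have hwimpos : 0 < w.im := by linarith
    have hsinβ : 0 < Real.sin β := by nlinarith [hwim]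
    obtain ⟨hαa, hαb⟩ := bounds_of_sin_neg hα1 hα2 hsinα
    obtain ⟨hβa, hβb⟩ := bounds_of_sin_pos hβ1 hβ2 hsinβ
    have h1 : 0 < r * s := mul_pos hr hs
    have hsd2 : Real.sin (β - α) < 0 := by
      have h2 : Real.sin (β - α) = z.im / (r * s) := by
        rw [eq_div_iff h1.ne']; linarith [key]
      rw [h2]; exact div_neg_of_neg_of_pos hneg h1
    have hle : α + π ≤ β := by
      by_contra hc
      push_neg at hc
      have h01 : 0 ≤ β - α := by linarith
      have h02 : β - α ≤ π := by linarith
      linarith [Real.sin_nonneg_of_nonneg_of_le_pi h01 h02]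
    exact ⟨(α, β), Or.inr ⟨hα1.le, hβ2, hle⟩, rfl, rfl⟩
  · -- z.im = 0 : degenerate cases
    have hwim0 : w.im = 0 := by linarith
    have hsinα : Real.sin α = 0 := by nlinarith [hzim]
    have hsinβ : Real.sin β = 0 := by nlinarith [hwim]
    have hαc : α = 0 ∨ α = π := by
      rcases eq_or_lt_of_le hα2 with he | hlt
      · exact Or.inr he
      · exact Or.inl ((Real.sin_eq_zero_iff_of_lt_of_lt hα1 hlt).mp hsinα)
    have hβc : β = 0 ∨ β = π := by
      rcases eq_or_lt_of_le hβ2 with he | hlt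
      · exact Or.inr he
      · exact Or.inl ((Real.sin_eq_zero_iff_of_lt_of_lt hβ1 hlt).mp hsinβ)
    have hπ : (0:ℝ) < π := Real.pi_pos
    rcases hαc with hα0 | hαπ <;> rcases hβc with hβ0 | hβπ
    · exfalso
      rw [hα0] at hzre; rw [hβ0] at hwre
      simp at hzre hwre
      linarith
    · exact ⟨(0, π), Or.inr ⟨by norm_num [Real.pi_nonneg], by norm_num, by norm_num⟩,
        by rw [hα0], by rw [hβπ]⟩
    · exact ⟨(π, 0), Or.inl ⟨by norm_num, by norm_num [Real.pi_nonneg], by norm_num⟩,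
        by rw [hαπ], by rw [hβ0]⟩
    · exact ⟨(π, -π), Or.inl ⟨by norm_num, by norm_num, by norm_num [Real.pi_nonneg]⟩,
        by rw [hαπ], by rw [hβπ]; exact coe_neg_pi⟩
  · -- z.im > 0 : q = (α, β) ∈ S1
    have hsinα : 0 < Real.sin α := by nlinarith [hzim]
    have hwimneg : w.im < 0 := by linarith
    have hsinβ : Real.sin β < 0 := by nlinarith [hwim]
    obtain ⟨hαa, hαb⟩ := bounds_of_sin_pos hα1 hα2 hsinα
    obtain ⟨hβa, hβb⟩ := bounds_of_sin_neg hβ1 hβ2 hsinβ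
    have h1 : 0 < r * s := mul_pos hr hs
    have hsd2 : 0 < Real.sin (β - α) := by
      have h2 : Real.sin (β - α) = z.im / (r * s) := by
        rw [eq_div_iff h1.ne']; linarith [key]
      rw [h2]; exact div_pos hpos h1
    have hle : β ≤ α - π := by
      by_contra hc
      push_neg at hc
      have h01 : -π ≤ β - α := by linarith
      have h02 : β - α ≤ 0 := by linarith
      linarith [Real.sin_nonpos_of_nonpos_of_neg_pi_le h02 h01]
    exact ⟨(α, β), Or.inl ⟨hα2, hβ1.le, hle⟩, rfl, rfl⟩

end CoamoebaLineAux

open CoamoebaLineAux in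
/-- The closure in `𝕋² = (ℝ/2πℤ)²` of the coamoeba of the line `H = {1 + z + w = 0}` is the
image under the projection `ℝ² → 𝕋²` of the union of the two closed triangles with vertices
`{(0,-π), (π,-π), (π,0)}` and `{(0,π), (-π,π), (-π,0)}`. -/
theorem closure_coamoeba_line
    (ArgH : Set (AddCircle (2 * Real.pi) × AddCircle (2 * Real.pi)))
    (hArgH : ArgH = {θ | ∃ z w : ℂ, z ≠ 0 ∧ w ≠ 0 ∧ 1 + z + w = 0 ∧
        θ.1 = ((Complex.arg z : ℝ) : AddCircle (2 * Real.pi)) ∧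
        θ.2 = ((Complex.arg w : ℝ) : AddCircle (2 * Real.pi))}) :
    closure ArgH
      = (fun q : ℝ × ℝ =>
          (((q.1 : ℝ) : AddCircle (2 * Real.pi)), ((q.2 : ℝ) : AddCircle (2 * Real.pi)))) ''
        (convexHull ℝ ({(0, -Real.pi), (Real.pi, -Real.pi), (Real.pi, 0)} : Set (ℝ × ℝ)) ∪
          convexHull ℝ ({(0, Real.pi), (-Real.pi, Real.pi), (-Real.pi, 0)} : Set (ℝ × ℝ))) := by
  subst hArgH
  set prm : ℝ × ℝ → AddCircle (2 * Real.pi) × AddCircle (2 * Real.pi) :=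
    fun q : ℝ × ℝ =>
      (((q.1 : ℝ) : AddCircle (2 * Real.pi)), ((q.2 : ℝ) : AddCircle (2 * Real.pi))) with hprm
  have hcont : Continuous prm :=
    ((AddCircle.continuous_mk' _).comp continuous_fst).prodMk
      ((AddCircle.continuous_mk' _).comp continuous_snd)
  apply Set.Subset.antisymm
  · -- closure ArgH ⊆ image
    apply closure_minimal
    · rintro θ ⟨z, w, hz, hw, heq, h1, h2⟩
      obtain ⟨q, hq, e1, e2⟩ := argH_cases hz hw heq
      refine ⟨q, ?_, ?_⟩
      · exact hq.imp (fun h => S1_subset_hull h) (fun h => S2_subset_hull h)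
      · have : prm q = θ := Prod.ext (e1.trans h1.symm) (e2.trans h2.symm)
        exact this
    · refine IsCompact.isClosed ?_
      refine IsCompact.image ?_ hcont
      exact ((Set.toFinite _).isCompact_convexHull ℝ).union ((Set.toFinite _).isCompact_convexHull ℝ)
  · -- image ⊆ closure ArgH
    rintro θ ⟨q, hq, rfl⟩
    have himg : ∀ (U : Set (ℝ × ℝ)),
        (∀ p ∈ U, ∃ z w : ℂ, z ≠ 0 ∧ w ≠ 0 ∧ 1 + z + w = 0 ∧
          Complex.arg z = p.1 ∧ Complex.arg w = p.2) →
        q ∈ closure U → prm q ∈ closure {θ : AddCircle (2 * Real.pi) × AddCircle (2 * Real.pi) |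
          ∃ z w : ℂ, z ≠ 0 ∧ w ≠ 0 ∧ 1 + z + w = 0 ∧
          θ.1 = ((Complex.arg z : ℝ) : AddCircle (2 * Real.pi)) ∧
          θ.2 = ((Complex.arg w : ℝ) : AddCircle (2 * Real.pi))} := by
      intro U hU hmem
      have h1 : prm q ∈ closure (prm '' U) :=
        image_closure_subset_closure_image hcont (Set.mem_image_of_mem prm hmem)
      refine closure_mono ?_ h1
      rintro _ ⟨p, hp, rfl⟩
      obtain ⟨z, w, hz, hw, heq, ha, hb⟩ := hU p hp
      exact ⟨z, w, hz, hw, heq, by rw [ha], by rw [hb]⟩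
    rcases hq with hq | hq
    · exact himg U1 (fun p hp => U1_spec (by simpa using hp)) (hull1_subset_closure hq)
    · exact himg U2 (fun p hp => U2_spec (by simpa using hp)) (hull2_subset_closure hq)
end
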